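/- arXiv:1907.08529 — 9 statements merged into one kernel-verified Lean document; each statement's English description precedes it below -/
import Mathlib

section
/- If φ is a multiplier of W (i.e., φf + (1-φ)g ∈ W for all f, g ∈ W), then for every n ∈ ℕ₊, φⁿ is also a multiplier of W. -/
/-- `φ` is a multiplier of `W`: `φ·f + (1-φ)·g ∈ W` for all `f, g ∈ W`. -/
def IsMultiplier {Ω X : Type*} [TopologicalSpace Ω] [AddCommGroup X] [Module ℂ X]
    [TopologicalSpace X] [IsTopologicalAddGroup X] [ContinuousSMul ℂ X]
    (φ : C(Ω, ℂ)) (W : Set C(Ω, X)) : Prop :=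
  ∀ f ∈ W, ∀ g ∈ W, φ • f + (1 - φ) • g ∈ W

theorem multiplier_pow {Ω X : Type*} [TopologicalSpace Ω] [AddCommGroup X] [Module ℂ X]
    [TopologicalSpace X] [IsTopologicalAddGroup X] [ContinuousSMul ℂ X]
    (φ : C(Ω, ℂ)) (W : Set C(Ω, X)) (h : IsMultiplier φ W) :
    ∀ n : ℕ, 0 < n → IsMultiplier (φ ^ n) W := by
  intro n hn
  induction n with
  | zero => exact absurd hn (lt_irrefl 0)
  | succ n ih =>
    rcases Nat.eq_zero_or_pos n with hn0 | hpos
    · subst hn0; simpa using h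
    · intro f hf g hg
      have h1 : (φ ^ n) • f + (1 - φ ^ n) • g ∈ W := ih hpos f hf g hg
      have h2 := h _ h1 g hg
      have key : φ • ((φ ^ n) • f + (1 - φ ^ n) • g) + (1 - φ) • g
          = (φ ^ (n + 1)) • f + (1 - φ ^ (n + 1)) • g := by
        ext x
        simp [smul_smul, pow_succ]
        module
      rwa [key] at h2
end

section
/- If φ is a multiplier of W, then 1 - φ is a multiplier of W, and more generally (1 - φⁿ)ᵐ is a multiplier of W for all n, m ∈ ℕ₊. -/
lemma isMultiplier_one_sub {Ω X : Type*} [TopologicalSpace Ω] [AddCommGroup X] [Module ℂ X]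
    [TopologicalSpace X] [IsTopologicalAddGroup X] [ContinuousSMul ℂ X]
    {φ : C(Ω, ℂ)} {W : Set C(Ω, X)} (h : IsMultiplier φ W) : IsMultiplier (1 - φ) W := by
  intro f hf g hg
  have := h g hg f hf
  have e : (1 - φ) • f + (1 - (1 - φ)) • g = φ • g + (1 - φ) • f := by
    module
  rw [e]; exact this

lemma isMultiplier_mul {Ω X : Type*} [TopologicalSpace Ω] [AddCommGroup X] [Module ℂ X]
    [TopologicalSpace X] [IsTopologicalAddGroup X] [ContinuousSMul ℂ X]
    {φ ψ : C(Ω, ℂ)} {W : Set C(Ω, X)} (hφ : IsMultiplier φ W) (hψ : IsMultiplier ψ W) :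
    IsMultiplier (φ * ψ) W := by
  intro f hf g hg
  have h1 : ψ • f + (1 - ψ) • g ∈ W := hψ f hf g hg
  have h2 := hφ _ h1 g hg
  have e : φ • (ψ • f + (1 - ψ) • g) + (1 - φ) • g
      = (φ * ψ) • f + (1 - φ * ψ) • g := by
    ext x
    simp [smul_smul]
    module
  rw [e] at h2; exact h2

lemma isMultiplier_pow {Ω X : Type*} [TopologicalSpace Ω] [AddCommGroup X] [Module ℂ X]
    [TopologicalSpace X] [IsTopologicalAddGroup X] [ContinuousSMul ℂ X]
    {φ : C(Ω, ℂ)} {W : Set C(Ω, X)} (h : IsMultiplier φ W) (n : ℕ) (hn : 0 < n) :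
    IsMultiplier (φ ^ n) W := by
  induction n with
  | zero => exact absurd hn (lt_irrefl 0)
  | succ k ih =>
    rcases Nat.eq_zero_or_pos k with hk | hk
    · subst hk; simpa using h
    · rw [pow_succ]
      exact isMultiplier_mul (ih hk) h

theorem multiplier_one_sub_pow {Ω X : Type*} [TopologicalSpace Ω] [AddCommGroup X] [Module ℂ X]
    [TopologicalSpace X] [IsTopologicalAddGroup X] [ContinuousSMul ℂ X]
    (φ : C(Ω, ℂ)) (W : Set C(Ω, X)) (h : IsMultiplier φ W) :
    IsMultiplier (1 - φ) W ∧
      ∀ n m : ℕ, 0 < n → 0 < m → IsMultiplier ((1 - φ ^ n) ^ m) W := by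
  refine ⟨isMultiplier_one_sub h, fun n m hn hm => ?_⟩
  exact isMultiplier_pow (isMultiplier_one_sub (isMultiplier_pow h n hn)) m hm
end

section
/- Let A be a subalgebra of the bounded continuous complex-valued functions on Ω, and let S ⊆ Ω be such that every f ∈ A with f(S) ⊆ [0,1] is constant on S. Then every f ∈ A which is real-valued on S is constant on S. -/
/-- Auxiliary: squares of real-valued elements are constant on `S`. -/
lemma sq_const_aux {Ω : Type*} [TopologicalSpace Ω]
    (A : Set (BoundedContinuousFunction Ω ℂ)) (S : Set Ω)
    (hmul : ∀ f ∈ A, ∀ g ∈ A, f * g ∈ A)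
    (hsmul : ∀ (c : ℂ), ∀ f ∈ A, c • f ∈ A)
    (hanti : ∀ f ∈ A, (∀ x ∈ S, ∃ r ∈ Set.Icc (0 : ℝ) 1, f x = (r : ℂ)) →
      ∀ x ∈ S, ∀ y ∈ S, f x = f y) :
    ∀ f ∈ A, (∀ x ∈ S, (f x).im = 0) →
      ∀ x ∈ S, ∀ y ∈ S, f x * f x = f y * f y := by
  intro f hf hre x hx y hy
  set c : ℝ := (‖f‖ ^ 2 + 1)⁻¹ with hc
  have hcpos : 0 < c := by positivity
  have hg : ((c : ℂ) • (f * f)) ∈ A := hsmul _ _ (hmul f hf f hf)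
  have key : ∀ z ∈ S, ∃ r ∈ Set.Icc (0 : ℝ) 1,
      ((c : ℂ) • (f * f)) z = (r : ℂ) := by
    intro z hz
    have hfz : f z = ((f z).re : ℂ) := by
      rw [Complex.ext_iff]
      simp [hre z hz]
    refine ⟨c * (f z).re ^ 2, ⟨by positivity, ?_⟩, ?_⟩
    · have h1 : |(f z).re| ≤ ‖f z‖ := Complex.abs_re_le_norm _
      have h2 : ‖f z‖ ≤ ‖f‖ := BoundedContinuousFunction.norm_coe_le_norm f z
      have h3 : (f z).re ^ 2 ≤ ‖f‖ ^ 2 := by nlinarith [abs_nonneg (f z).re, sq_abs (f z).re]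
      rw [hc, inv_mul_le_iff₀ (by positivity)]
      nlinarith
    · simp only [BoundedContinuousFunction.coe_smul, BoundedContinuousFunction.coe_mul,
        Pi.smul_apply, Pi.mul_apply, smul_eq_mul]
      rw [hfz]
      push_cast
      ring_nf
      simp
  have := hanti _ hg key x hx y hy
  simp only [BoundedContinuousFunction.coe_smul, Pi.smul_apply,
    BoundedContinuousFunction.coe_mul, Pi.mul_apply, smul_eq_mul] at this
  have hcne : (c : ℂ) ≠ 0 := by exact_mod_cast hcpos.ne'
  exact mul_left_cancel₀ hcne this

/-- If every `f ∈ A` mapping `S` into `[0,1]` is constant on `S`, then every `f ∈ A`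
real-valued on `S` is constant on `S`, for a subalgebra `A` of bounded continuous
complex functions. -/
theorem antisym_real_of_antisym_unit {Ω : Type*} [TopologicalSpace Ω]
    (A : Set (BoundedContinuousFunction Ω ℂ)) (S : Set Ω)
    (hadd : ∀ f ∈ A, ∀ g ∈ A, f + g ∈ A)
    (hmul : ∀ f ∈ A, ∀ g ∈ A, f * g ∈ A)
    (hsmul : ∀ (c : ℂ), ∀ f ∈ A, c • f ∈ A)
    (hanti : ∀ f ∈ A, (∀ x ∈ S, ∃ r ∈ Set.Icc (0 : ℝ) 1, f x = (r : ℂ)) →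
      ∀ x ∈ S, ∀ y ∈ S, f x = f y) :
    ∀ f ∈ A, (∀ x ∈ S, (f x).im = 0) → ∀ x ∈ S, ∀ y ∈ S, f x = f y := by
  intro f hf hre x hx y hy
  have hsq := sq_const_aux A S hmul hsmul hanti f hf hre x hx y hy
  have hg : (f + f * f) ∈ A := hadd f hf _ (hmul f hf f hf)
  have hgre : ∀ z ∈ S, ((f + f * f) z).im = 0 := by
    intro z hz
    simp only [BoundedContinuousFunction.coe_add, BoundedContinuousFunction.coe_mul,
      Pi.add_apply, Pi.mul_apply, Complex.add_im, Complex.mul_im]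
    rw [hre z hz]
    ring
  have hsq2 := sq_const_aux A S hmul hsmul hanti _ hg hgre x hx y hy
  simp only [BoundedContinuousFunction.coe_add, BoundedContinuousFunction.coe_mul,
    Pi.add_apply, Pi.mul_apply] at hsq2
  -- From a² = b² and (a+a²)² = (b+b²)² deduce a = b.
  set a := f x
  set b := f y
  have hcube : a * a * a = b * b * b := by
    linear_combination (hsq2 - hsq - (a * a + b * b) * hsq) / 2
  by_cases ha : a = 0
  · have : b * b = 0 := by rw [← hsq, ha]; ring
    rcases mul_self_eq_zero.mp this with hb
    rw [ha, hb]
  · have ha2 : a * a ≠ 0 := mul_ne_zero ha ha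
    have : a * (a * a) = b * (a * a) := by
      linear_combination hcube - b * hsq
    exact mul_right_cancel₀ ha2 this
end

section
/- Let Ω be a compact topological space, X a Hausdorff locally convex space with seminorm p, and X₀ a convex subset of X. Then for every continuous f : Ω → X, sup over t ∈ Ω of dist_p(f(t), X₀) equals inf over g ∈ C(Ω, X₀) of sup over t ∈ Ω of p(f(t) - g(t)), where C(Ω, X₀) denotes continuous functions Ω → X with values in X₀ and dist_p(y, X₀) = inf{p(y - x) : x ∈ X₀}. -/
/-- Burlando's distance formula, compact case: for convex `X₀` and a continuous
seminorm `p`, the uniform distance from `f` to continuous `X₀`-valued functions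
equals the supremum of pointwise distances to `X₀`. -/
theorem distance_formula {Ω X : Type*} [TopologicalSpace Ω] [CompactSpace Ω]
    [AddCommGroup X] [Module ℝ X] [TopologicalSpace X] [IsTopologicalAddGroup X]
    [ContinuousSMul ℝ X] [LocallyConvexSpace ℝ X] [T2Space X]
    (p : Seminorm ℝ X) (hp : Continuous p)
    (X₀ : Set X) (hX₀ : Convex ℝ X₀) (f : C(Ω, X)) :
    (⨆ t : Ω, ⨅ x : X₀, p (f t - x)) =
      ⨅ g : {g : C(Ω, X) // ∀ t, g t ∈ X₀}, ⨆ t : Ω, p (f t - g.1 t) := by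
  classical
  rcases isEmpty_or_nonempty Ω with hΩ | hΩ
  · have hg : Nonempty {g : C(Ω, X) // ∀ t, g t ∈ X₀} :=
      ⟨⟨ContinuousMap.const Ω 0, fun t => isEmptyElim t⟩⟩
    rw [Real.iSup_of_isEmpty]
    have : ∀ g : {g : C(Ω, X) // ∀ t, g t ∈ X₀},
        (⨆ t : Ω, p (f t - g.1 t)) = (0 : ℝ) := fun g => Real.iSup_of_isEmpty _
    simp_rw [this]
    exact (ciInf_const).symm
  rcases isEmpty_or_nonempty X₀ with hX | hX
  · have hg : IsEmpty {g : C(Ω, X) // ∀ t, g t ∈ X₀} := by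
      constructor; rintro ⟨g, hgm⟩
      exact hX.elim ⟨g hΩ.some, hgm hΩ.some⟩
    rw [Real.iInf_of_isEmpty]
    have : ∀ t : Ω, (⨅ x : X₀, p (f t - x)) = (0 : ℝ) := fun t => Real.iInf_of_isEmpty _
    simp_rw [this]
    exact ciSup_const
  -- main case: Ω and X₀ nonempty
  set d : Ω → ℝ := fun t => ⨅ x : X₀, p (f t - x) with hd
  have hbb : ∀ t : Ω, BddBelow (Set.range fun x : X₀ => p (f t - ↑x)) := fun t =>
    ⟨0, by rintro r ⟨x, rfl⟩; exact apply_nonneg p _⟩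
  have hd0 : ∀ t, 0 ≤ d t := fun t => Real.iInf_nonneg fun x => apply_nonneg p _
  haveI : Nonempty X₀ := hX
  obtain ⟨x₀⟩ := hX
  have hcont : ∀ x : X, Continuous fun t : Ω => p (f t - x) := fun x =>
    hp.comp (f.continuous.sub continuous_const)
  obtain ⟨C, hC⟩ := (isCompact_range (hcont x₀)).bddAbove
  have hdbdd : BddAbove (Set.range d) := ⟨C, by
    rintro _ ⟨t, rfl⟩
    exact (ciInf_le (hbb t) x₀).trans (hC ⟨t, rfl⟩)⟩
  set M := ⨆ t, d t with hM
  haveI : Nonempty {g : C(Ω, X) // ∀ t, g t ∈ X₀} :=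
    ⟨⟨ContinuousMap.const Ω ↑x₀, fun _ => x₀.2⟩⟩
  apply le_antisymm
  · refine le_ciInf fun g => ?_
    have hgb : BddAbove (Set.range fun t : Ω => p (f t - g.1 t)) :=
      (isCompact_range (hp.comp (f.continuous.sub g.1.continuous))).bddAbove
    exact ciSup_mono hgb fun t => ciInf_le (hbb t) ⟨g.1 t, g.2 t⟩
  · -- inf over g ≤ M
    refine le_of_forall_pos_le_add fun ε hε => ?_
    have hMnn : 0 ≤ M := (hd0 hΩ.some).trans (le_ciSup hdbdd hΩ.some)
    -- choose pointwise good elements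
    have hMε : ∀ t : Ω, ∃ x : X₀, p (f t - x) < M + ε := by
      intro t
      have h1 : d t < M + ε := lt_of_le_of_lt (le_ciSup hdbdd t) (by linarith)
      exact exists_lt_of_ciInf_lt h1
    choose xt hxt using hMε
    set U : Ω → Set Ω := fun t => {s | p (f s - xt t) < M + ε} with hU
    have hUopen : ∀ t, IsOpen (U t) := fun t => isOpen_lt (hcont _) continuous_const
    have hUcover : (Set.univ : Set Ω) ⊆ ⋃ t, U t := fun s _ =>
      Set.mem_iUnion.2 ⟨s, hxt s⟩
    obtain ⟨I, hI⟩ := isCompact_univ.elim_finite_subcover U hUopen hUcover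
    set φ : Ω → Ω → ℝ := fun i w => max 0 (M + ε - p (f w - xt i)) with hφ
    have hφcont : ∀ i, Continuous (φ i) := fun i =>
      continuous_const.max (continuous_const.sub (hcont _))
    have hφ0 : ∀ i w, 0 ≤ φ i w := fun i w => le_max_left _ _
    set S : Ω → ℝ := fun w => ∑ i ∈ I, φ i w with hS
    have hScont : Continuous S := continuous_finset_sum _ fun i _ => hφcont i
    have hSpos : ∀ w, 0 < S w := by
      intro w
      obtain ⟨i, hiI, hiw⟩ : ∃ i ∈ I, w ∈ U i := by
        have := hI (Set.mem_univ w)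
        simpa using this
      refine Finset.sum_pos' (fun j _ => hφ0 j w) ⟨i, hiI, ?_⟩
      have h2 : p (f w - xt i) < M + ε := hiw
      have : 0 < M + ε - p (f w - xt i) := by linarith
      simp only [hφ, lt_max_iff]
      exact Or.inr this
    set lam : Ω → Ω → ℝ := fun i w => (S w)⁻¹ * φ i w with hlam
    have hlam0 : ∀ i w, 0 ≤ lam i w := fun i w =>
      mul_nonneg (inv_nonneg.2 (hSpos w).le) (hφ0 i w)
    have hlam1 : ∀ w, ∑ i ∈ I, lam i w = 1 := by
      intro w
      simp only [hlam, ← Finset.mul_sum]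
      exact inv_mul_cancel₀ (hSpos w).ne'
    set g : Ω → X := fun w => ∑ i ∈ I, lam i w • (xt i : X) with hg
    have hgcont : Continuous g :=
      continuous_finset_sum _ fun i _ =>
        (((hScont.inv₀ fun w => (hSpos w).ne').mul (hφcont i)).smul continuous_const)
    have hgmem : ∀ w, g w ∈ X₀ := fun w =>
      hX₀.sum_mem (fun i _ => hlam0 i w) (hlam1 w) fun i _ => (xt i).2
    have hterm : ∀ i w, lam i w * p (f w - xt i) ≤ lam i w * (M + ε) := by
      intro i w
      rcases (hφ0 i w).eq_or_lt with h | h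
      · have : lam i w = 0 := by simp [hlam, ← h]
        simp [this]
      · have hplt : p (f w - xt i) < M + ε := by
          rcases lt_max_iff.1 h with h' | h'
          · exact absurd h' (lt_irrefl 0)
          · linarith
        exact mul_le_mul_of_nonneg_left hplt.le (hlam0 i w)
    have hgbound : ∀ w, p (f w - g w) ≤ M + ε := by
      intro w
      have hfw : f w - g w = ∑ i ∈ I, lam i w • (f w - xt i) := by
        have h1 : f w = ∑ i ∈ I, lam i w • f w := by
          rw [← Finset.sum_smul, hlam1, one_smul]
        calc f w - g w = (∑ i ∈ I, lam i w • f w) - ∑ i ∈ I, lam i w • (xt i : X) := by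
              rw [← h1]
          _ = ∑ i ∈ I, (lam i w • f w - lam i w • (xt i : X)) := by
              rw [Finset.sum_sub_distrib]
          _ = ∑ i ∈ I, lam i w • (f w - xt i) := by
              refine Finset.sum_congr rfl fun i _ => ?_
              rw [smul_sub]
      rw [hfw]
      calc p (∑ i ∈ I, lam i w • (f w - xt i))
          ≤ ∑ i ∈ I, p (lam i w • (f w - xt i)) := by
            refine Finset.le_sum_of_subadditive p (map_zero p).le ?_ _ _
            exact fun x y => map_add_le_add p x y
        _ = ∑ i ∈ I, lam i w * p (f w - xt i) := by
            refine Finset.sum_congr rfl fun i _ => ?_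
            rw [map_smul_eq_mul, Real.norm_eq_abs, abs_of_nonneg (hlam0 i w)]
        _ ≤ ∑ i ∈ I, lam i w * (M + ε) := Finset.sum_le_sum fun i _ => hterm i w
        _ = M + ε := by rw [← Finset.sum_mul, hlam1, one_mul]
    have hgsup : (⨆ t : Ω, p (f t - g t)) ≤ M + ε := ciSup_le fun t => hgbound t
    have hbdI : BddBelow (Set.range fun g : {g : C(Ω, X) // ∀ t, g t ∈ X₀} =>
        ⨆ t : Ω, p (f t - g.1 t)) :=
      ⟨0, by rintro r ⟨g, rfl⟩; exact Real.iSup_nonneg fun t => apply_nonneg p _⟩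
    exact (ciInf_le hbdI ⟨⟨g, hgcont⟩, hgmem⟩).trans hgsup
end

section
/- Let a ≤ t₀, ..., tₙ ≤ b be distinct reals and X a Banach space. The set of restrictions to [a,b] of X-valued polynomial functions f (finite sums of terms z^k·x with x ∈ X) satisfying f^(j)(t_i) = 0 for all 0 ≤ i ≤ n and 1 ≤ j ≤ m is dense in C([a,b], X) in the uniform topology. -/
open Polynomial


lemma iterDeriv_sum_eval_smul {X : Type*} [NormedAddCommGroup X] [NormedSpace ℝ X]
    (j : ℕ) : ∀ (K : ℕ) (p : ℕ → ℝ[X]) (x : ℕ → X),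
    iteratedDeriv j (fun s : ℝ => ∑ l ∈ Finset.range K, (p l).eval s • x l)
    = fun s => ∑ l ∈ Finset.range K, ((⇑derivative)^[j] (p l)).eval s • x l := by
  induction j with
  | zero => intro K p x; simp [iteratedDeriv_zero]
  | succ j ih =>
    intro K p x
    rw [iteratedDeriv_succ']
    have hd : (deriv fun s : ℝ => ∑ l ∈ Finset.range K, (p l).eval s • x l)
        = fun s => ∑ l ∈ Finset.range K, ((p l).derivative).eval s • x l := by
      funext s
      rw [deriv_fun_sum (fun i _ => ((p i).differentiableAt).smul_const (x i))]
      refine Finset.sum_congr rfl fun l _ => ?_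
      rw [deriv_smul_const ((p l).differentiableAt), Polynomial.deriv]
    rw [hd, ih K (fun l => (p l).derivative) x]
    funext s
    refine Finset.sum_congr rfl fun l _ => ?_
    rw [← Function.iterate_succ_apply]

lemma dvd_iter_derivative {τ : ℝ} :
    ∀ (j r : ℕ) (q : ℝ[X]), j ≤ r → (X - C τ)^r ∣ q →
      (X - C τ)^(r - j) ∣ (⇑derivative)^[j] q := by
  intro j
  induction j with
  | zero => intro r q _ h; simpa using h
  | succ j ih =>
    intro r q hjr hq
    obtain ⟨u, rfl⟩ := hq
    rw [Function.iterate_succ_apply]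
    have h1 : (X - C τ)^(r-1) ∣ derivative ((X - C τ)^r * u) := by
      rw [derivative_mul, derivative_pow, derivative_X_sub_C, mul_one]
      exact dvd_add (Dvd.dvd.mul_right (Dvd.dvd.mul_left (dvd_refl _) _) _)
        ((pow_dvd_pow _ (Nat.sub_le r 1)).mul_right _)
    obtain ⟨v, hv⟩ := h1
    rw [hv]
    have : r - (j+1) = (r-1) - j := by omega
    rw [this]
    exact ih (r-1) _ (by omega) ⟨v, rfl⟩

lemma eval_iter_deriv_zero {τ : ℝ} {q : ℝ[X]} {m j : ℕ}
    (hdvd : (X - C τ)^m ∣ derivative q) (h1 : 1 ≤ j) (hm : j ≤ m) :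
    ((⇑derivative)^[j] q).eval τ = 0 := by
  obtain ⟨j, rfl⟩ : ∃ j', j = j' + 1 := ⟨j - 1, by omega⟩
  rw [Function.iterate_succ_apply]
  have := dvd_iter_derivative j m (derivative q) (by omega) hdvd
  have h2 : (X - C τ) ∣ (⇑derivative)^[j] (derivative q) :=
    dvd_trans (dvd_pow_self _ (by omega : m - j ≠ 0)) this
  obtain ⟨u, hu⟩ := h2
  simp [hu]


noncomputable def hatf (x : ℝ) : ℝ := (|x+1| - 2*|x| + |x-1|)/2

lemma hatf_nonneg (x : ℝ) : 0 ≤ hatf x := by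
  have h := abs_add_le (x+1) (x-1)
  have : (x+1) + (x-1) = 2*x := by ring
  rw [this] at h
  have h2 : |2*x| = 2*|x| := by rw [abs_mul]; simp
  unfold hatf; linarith [h2 ▸ h]

lemma hatf_le_one (x : ℝ) : hatf x ≤ 1 := by
  have h1 : |x+1| ≤ |x| + 1 := by simpa using abs_add_le x 1
  have h2 : |x-1| ≤ |x| + 1 := by simpa using abs_sub x 1
  unfold hatf; linarith

lemma hatf_eq_zero {x : ℝ} (h : 1 ≤ |x|) : hatf x = 0 := by
  unfold hatf
  rcases le_abs.mp h with h1 | h1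
  · rw [abs_of_nonneg (by linarith), abs_of_nonneg (by linarith), abs_of_nonneg (by linarith)]
    ring
  · rw [abs_of_nonpos (by linarith), abs_of_nonpos (by linarith), abs_of_nonpos (by linarith)]
    ring

lemma hatf_continuous : Continuous hatf := by
  unfold hatf; fun_prop

lemma hatf_sum {K : ℕ} {y : ℝ} (hy0 : 0 ≤ y) (hyK : y ≤ K) :
    ∑ l ∈ Finset.range (K+1), hatf (y - l) = 1 := by
  set A : ℕ → ℝ := fun l => |y + 1 - l| with hA
  have key : ∀ l : ℕ, hatf (y - l) = ((A l - A (l+1)) - (A (l+1) - A (l+2)))/2 := by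
    intro l
    simp only [hA]
    push_cast
    unfold hatf
    rw [show y - (l:ℝ) - 1 = y + 1 - ((l:ℝ)+2) from by ring,
        show y - (l:ℝ) + 1 = y + 1 - (l:ℝ) from by ring,
        show y - (l:ℝ) = y + 1 - ((l:ℝ)+1) from by ring]
    ring
  rw [Finset.sum_congr rfl (fun l _ => key l), ← Finset.sum_div, Finset.sum_sub_distrib,
      Finset.sum_range_sub' A (K+1), Finset.sum_range_sub' (fun l => A (l+1)) (K+1)]
  have h0 : A 0 = y + 1 := by
    simp only [hA, Nat.cast_zero, sub_zero]; rw [abs_of_nonneg (by linarith)]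
  have h1 : A 1 = y := by
    simp only [hA, Nat.cast_one]; rw [abs_of_nonneg (by linarith)]; ring
  have hK1 : A (K+1) = K - y := by
    simp only [hA]; push_cast
    rw [abs_of_nonpos (by linarith)]; ring
  have hK2 : A (K+2) = K + 1 - y := by
    simp only [hA]; push_cast
    rw [abs_of_nonpos (by linarith)]; ring
  rw [h0, hK1, h1, hK2]
  ring

lemma vector_weierstrass {X : Type*} [NormedAddCommGroup X] [NormedSpace ℝ X]
    (a b : ℝ) (hab : a < b) (f : ℝ → X) (hf : ContinuousOn f (Set.Icc a b)) (ε : ℝ) (hε : 0 < ε) :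
    ∃ (K : ℕ) (q : ℕ → ℝ[X]) (x : ℕ → X),
      ∀ s ∈ Set.Icc a b, ‖f s - ∑ l ∈ Finset.range K, (q l).eval s • x l‖ ≤ ε := by
  obtain ⟨δ, hδ, H⟩ := Metric.uniformContinuousOn_iff.mp
    (isCompact_Icc.uniformContinuousOn_of_continuous hf) (ε/2) (by positivity)
  set K : ℕ := ⌈(b-a)/δ⌉₊ + 1 with hK
  have hKpos : 0 < (K:ℝ) := by positivity
  set Δ : ℝ := (b-a)/K with hΔ
  have hΔpos : 0 < Δ := by apply div_pos <;> [linarith; exact hKpos]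
  have hKΔ : (K:ℝ) * Δ = b - a := by
    rw [hΔ, mul_div_cancel₀ _ (ne_of_gt hKpos)]
  have hΔδ : Δ < δ := by
    rw [hΔ, div_lt_iff₀ hKpos]
    have h1 : (b-a)/δ ≤ (⌈(b-a)/δ⌉₊ : ℝ) := Nat.le_ceil _
    have h2 : ((⌈(b-a)/δ⌉₊ : ℝ)) < K := by rw [hK]; push_cast; linarith
    have h3 : ((b-a)/δ)*δ ≤ (⌈(b-a)/δ⌉₊ : ℝ)*δ := mul_le_mul_of_nonneg_right h1 hδ.le
    rw [div_mul_cancel₀ _ (ne_of_gt hδ)] at h3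
    nlinarith
  set x : ℕ → X := fun l => f (a + l * Δ) with hx
  have hmem : ∀ l ∈ Finset.range (K+1), a + l * Δ ∈ Set.Icc a b := by
    intro l hl
    rw [Finset.mem_range] at hl
    constructor
    · nlinarith [hΔpos.le, (Nat.cast_nonneg l : (0:ℝ) ≤ l)]
    · have : (l:ℝ) ≤ K := by exact_mod_cast Nat.lt_succ_iff.mp hl
      nlinarith
  have hq : ∀ l : ℕ, ∃ p : ℝ[X], ∀ s ∈ Set.Icc a b,
      |p.eval s - hatf ((s - a)/Δ - l)| < ε/(2*(K+1)*(‖x l‖+1)) := by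
    intro l
    apply exists_polynomial_near_of_continuousOn
    · exact (hatf_continuous.comp (by fun_prop)).continuousOn
    · have : (0:ℝ) < ‖x l‖ + 1 := by positivity
      positivity
  choose q hq using hq
  refine ⟨K+1, q, x, fun s hs => ?_⟩
  set y : ℝ := (s - a)/Δ with hy
  have hy0 : 0 ≤ y := div_nonneg (by linarith [hs.1]) hΔpos.le
  have hyK : y ≤ K := by
    rw [hy, div_le_iff₀ hΔpos]
    calc s - a ≤ b - a := by linarith [hs.2]
    _ = K * Δ := hKΔ.symm
  have hsum : ∑ l ∈ Finset.range (K+1), hatf (y - l) = 1 := hatf_sum hy0 hyK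
  have split : f s - ∑ l ∈ Finset.range (K+1), (q l).eval s • x l
      = (∑ l ∈ Finset.range (K+1), hatf (y - l) • (f s - x l))
        + ∑ l ∈ Finset.range (K+1), ((hatf (y - l) - (q l).eval s)) • x l := by
    have hterm : ∀ l : ℕ, hatf (y - l) • (f s - x l) + (hatf (y - l) - (q l).eval s) • x l
        = hatf (y - l) • f s - (q l).eval s • x l := by
      intro l; rw [smul_sub, sub_smul]; abel
    rw [← Finset.sum_add_distrib, Finset.sum_congr rfl (fun l _ => hterm l),
        Finset.sum_sub_distrib, ← Finset.sum_smul, hsum, one_smul]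
  rw [split]
  have bndA : ‖∑ l ∈ Finset.range (K+1), hatf (y - l) • (f s - x l)‖ ≤ ε/2 := by
    refine le_trans (norm_sum_le _ _) ?_
    have step : ∀ l ∈ Finset.range (K+1),
        ‖hatf (y - l) • (f s - x l)‖ ≤ hatf (y - l) * (ε/2) := by
      intro l hl
      rw [norm_smul, Real.norm_eq_abs, abs_of_nonneg (hatf_nonneg _)]
      rcases eq_or_ne (hatf (y - l)) 0 with h0 | hne
      · simp [h0]
      · have hlt : |y - l| < 1 := by
          by_contra hcon
          exact hne (hatf_eq_zero (not_lt.mp hcon))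
        have hdist : dist s (a + l * Δ) < δ := by
          rw [Real.dist_eq]
          have e : s - (a + l * Δ) = Δ * (y - l) := by
            rw [hy, mul_sub, mul_div_cancel₀ _ (ne_of_gt hΔpos)]; ring
          rw [e, abs_mul, abs_of_nonneg hΔpos.le]
          calc Δ * |y - l| ≤ Δ * 1 := by
                exact mul_le_mul_of_nonneg_left hlt.le hΔpos.le
          _ < δ := by rw [mul_one]; exact hΔδ
        have := H s hs _ (hmem l hl) hdist
        rw [dist_eq_norm] at this
        exact mul_le_mul_of_nonneg_left this.le (hatf_nonneg _)
    refine le_trans (Finset.sum_le_sum step) ?_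
    rw [← Finset.sum_mul, hsum, one_mul]
  have bndB : ‖∑ l ∈ Finset.range (K+1), (hatf (y - l) - (q l).eval s) • x l‖ ≤ ε/2 := by
    refine le_trans (norm_sum_le _ _) ?_
    have step : ∀ l ∈ Finset.range (K+1),
        ‖(hatf (y - l) - (q l).eval s) • x l‖ ≤ ε/(2*(K+1)) := by
      intro l hl
      rw [norm_smul, Real.norm_eq_abs, abs_sub_comm]
      have h1 : |(q l).eval s - hatf (y - l)| ≤ ε/(2*(K+1)*(‖x l‖+1)) := by
        rw [hy]; exact (hq l s hs).le
      have hw : (0:ℝ) < ‖x l‖ + 1 := by positivity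
      calc |(q l).eval s - hatf (y - l)| * ‖x l‖
          ≤ (ε/(2*(K+1)*(‖x l‖+1))) * (‖x l‖+1) := by
            refine mul_le_mul h1 (by linarith) (norm_nonneg _) (by positivity)
      _ = ε/(2*(K+1)) := by field_simp
    refine le_trans (Finset.sum_le_sum step) ?_
    rw [Finset.sum_const, Finset.card_range, nsmul_eq_mul]
    push_cast
    have hA : (0:ℝ) < (⌈(b - a) / δ⌉₊:ℝ) + 1 + 1 := by positivity
    have : ((⌈(b - a) / δ⌉₊:ℝ) + 1 + 1) * (ε / (2 * ((⌈(b - a) / δ⌉₊:ℝ) + 1 + 1))) = ε/2 := by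
      field_simp
    linarith [this, show ((K:ℝ)+1) * (ε / (2 * ((K:ℝ)+1))) = ε/2 by rw [hK]; push_cast; exact this]
  calc ‖(∑ l ∈ Finset.range (K+1), hatf (y - l) • (f s - x l))
        + ∑ l ∈ Finset.range (K+1), (hatf (y - l) - (q l).eval s) • x l‖
      ≤ ‖∑ l ∈ Finset.range (K+1), hatf (y - l) • (f s - x l)‖
        + ‖∑ l ∈ Finset.range (K+1), (hatf (y - l) - (q l).eval s) • x l‖ := norm_add_le _ _
  _ ≤ ε/2 + ε/2 := add_le_add bndA bndB
  _ = ε := by ring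


lemma one_sub_prod_le {ι : Type*} (s : Finset ι) (v : ι → ℝ)
    (hv : ∀ i ∈ s, 0 ≤ v i ∧ v i ≤ 1) :
    1 - ∏ i ∈ s, v i ≤ ∑ i ∈ s, (1 - v i) := by
  induction s using Finset.cons_induction with
  | empty => simp
  | cons a s ha ih =>
    rw [Finset.prod_cons, Finset.sum_cons]
    have hP0 : 0 ≤ ∏ i ∈ s, v i :=
      Finset.prod_nonneg fun i hi => (hv i (Finset.mem_cons_of_mem hi)).1
    have hP1 : ∏ i ∈ s, v i ≤ 1 :=
      Finset.prod_le_one (fun i hi => (hv i (Finset.mem_cons_of_mem hi)).1)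
        (fun i hi => (hv i (Finset.mem_cons_of_mem hi)).2)
    have ha0 := hv a (Finset.mem_cons_self a s)
    have := ih (fun i hi => hv i (Finset.mem_cons_of_mem hi))
    nlinarith [ha0.1, ha0.2]

lemma pow_one_sub_le_inv (w : ℝ) (hw0 : 0 ≤ w) (hw1 : w ≤ 1) (N : ℕ) :
    (1-w)^N ≤ 1/(1 + (N:ℝ)*w) := by
  have hB0 : 0 ≤ (1-w)^N := pow_nonneg (by linarith) _
  have hbern : 1 + (N:ℝ)*w ≤ (1+w)^N := one_add_mul_le_pow (by linarith) N
  have hprod : (1-w)^N * (1+w)^N ≤ 1 := by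
    rw [← mul_pow]
    have e : (1-w)*(1+w) = 1 - w^2 := by ring
    rw [e]
    exact pow_le_one₀ (by nlinarith) (by nlinarith)
  have hpos : (0:ℝ) < 1 + (N:ℝ)*w := by
    have := mul_nonneg (Nat.cast_nonneg (α := ℝ) N) hw0
    linarith
  rw [le_div_iff₀ hpos]
  calc (1-w)^N * (1 + (N:ℝ)*w) ≤ (1-w)^N * (1+w)^N :=
        mul_le_mul_of_nonneg_left hbern hB0
  _ ≤ 1 := hprod

lemma exists_large_sqrt (CC η : ℝ) (hCC0 : 0 ≤ CC) (hη : 0 < η) :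
    ∃ Nb : ℕ, 1 ≤ Nb ∧ CC / Real.sqrt Nb ≤ η := by
  refine ⟨max 1 (⌈(CC/η)^2⌉₊ + 1), le_max_left _ _, ?_⟩
  set Nb : ℕ := max 1 (⌈(CC/η)^2⌉₊ + 1) with hNb
  have hNb1 : 1 ≤ Nb := le_max_left _ _
  have hNbpos : (0:ℝ) < Nb := by exact_mod_cast Nat.lt_of_lt_of_le Nat.zero_lt_one hNb1
  have hsqrtpos : 0 < Real.sqrt Nb := Real.sqrt_pos.mpr hNbpos
  have h1 : (CC/η)^2 ≤ (Nb:ℝ) := by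
    calc (CC/η)^2 ≤ (⌈(CC/η)^2⌉₊ : ℝ) := Nat.le_ceil _
    _ ≤ (Nb:ℝ) := by
      have h3 : (⌈(CC/η)^2⌉₊ + 1 : ℕ) ≤ Nb := le_max_right _ _
      have h4 : (⌈(CC/η)^2⌉₊ : ℕ) ≤ Nb := le_trans (Nat.le_succ _) h3
      exact_mod_cast h4
  have h2 : CC/η ≤ Real.sqrt Nb := by
    calc CC/η ≤ |CC/η| := le_abs_self _
    _ = Real.sqrt ((CC/η)^2) := (Real.sqrt_sq_eq_abs _).symm
    _ ≤ Real.sqrt Nb := Real.sqrt_le_sqrt h1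
  rw [div_le_iff₀ hsqrtpos]
  calc CC = (CC/η) * η := by field_simp
  _ ≤ Real.sqrt Nb * η := mul_le_mul_of_nonneg_right h2 hη.le
  _ = η * Real.sqrt Nb := mul_comm _ _

lemma exists_good_g (a b : ℝ) (hab : a ≤ b) (n m : ℕ)
    (t : Fin (n+1) → ℝ) (htmem : ∀ i, t i ∈ Set.Icc a b) (η : ℝ) (hη : 0 < η) :
    ∃ g : ℝ[X], (∀ i, (X - C (t i))^m ∣ derivative g) ∧
      ∀ s ∈ Set.Icc a b, |g.eval s - s| ≤ η := by
  obtain ⟨M, hM⟩ : ∃ M : ℝ, M = b - a + 1 := ⟨_, rfl⟩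
  have hM0 : 0 < M := by rw [hM]; linarith
  have hMba : b - a < M := by rw [hM]; linarith
  obtain ⟨CC, hCC⟩ : ∃ CC : ℝ, CC = ((n:ℝ)+1) * m * Real.pi * M := ⟨_, rfl⟩
  have hCC0 : 0 ≤ CC := by
    rw [hCC]
    have := Real.pi_pos
    positivity
  obtain ⟨Nb, hNb1, hsqrt⟩ := exists_large_sqrt CC η hCC0 hη
  have hNbpos : (0:ℝ) < Nb := by exact_mod_cast Nat.lt_of_lt_of_le Nat.zero_lt_one hNb1
  have hsqrtpos : 0 < Real.sqrt Nb := Real.sqrt_pos.mpr hNbpos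
  obtain ⟨β, hβ⟩ : ∃ β : Fin (n+1) → ℝ[X],
      β = fun i => (1 - C (1/M^2) * (X - C (t i))^2)^Nb := ⟨_, rfl⟩
  obtain ⟨h, hh⟩ : ∃ h : ℝ[X], h = ∏ i, (1 - β i)^m := ⟨_, rfl⟩
  -- divisibility
  have hdvd : ∀ i, (X - C (t i))^m ∣ h := by
    intro i
    have hroot : (X - C (t i)) ∣ (1 - β i) := by
      rw [dvd_iff_isRoot]
      simp [hβ, IsRoot, eval_pow]
    rw [hh]
    exact dvd_trans (pow_dvd_pow_of_dvd hroot m) (Finset.dvd_prod_of_mem _ (Finset.mem_univ i))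
  -- antiderivative
  obtain ⟨G, hGdef⟩ : ∃ G : ℝ[X], G = ∑ k ∈ Finset.range (h.natDegree + 1),
      C (h.coeff k / (k+1)) * X^(k+1) := ⟨_, rfl⟩
  have hG : derivative G = h := by
    rw [hGdef, derivative_sum]
    have : ∀ k ∈ Finset.range (h.natDegree + 1),
        derivative (C (h.coeff k / (k+1)) * X^(k+1)) = C (h.coeff k) * X^k := by
      intro k _
      rw [derivative_C_mul, derivative_X_pow]
      push_cast
      rw [← mul_assoc, ← C_mul]
      congr 2
      field_simp
    rw [Finset.sum_congr rfl this]
    conv_rhs => rw [h.as_sum_range' (h.natDegree + 1) (Nat.lt_succ_self _)]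
    exact Finset.sum_congr rfl fun k _ => C_mul_X_pow_eq_monomial
  obtain ⟨g, hgdef⟩ : ∃ g : ℝ[X], g = G - C (G.eval a - a) := ⟨_, rfl⟩
  have hdg : derivative g = h := by
    rw [hgdef, derivative_sub, derivative_C, sub_zero, hG]
  refine ⟨g, fun i => hdg.symm ▸ hdvd i, ?_⟩
  -- pointwise estimates on [a,b]
  have habs : ∀ i, ∀ u ∈ Set.Icc a b, (u - t i)^2 ≤ M^2 ∧ (1/M^2) * (u - t i)^2 ≤ 1 := by
    intro i u hu
    have h1 := (htmem i).1; have h2 := (htmem i).2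
    have h3 := hu.1; have h4 := hu.2
    have : (u - t i)^2 ≤ M^2 := by nlinarith
    exact ⟨this, by rw [div_mul_eq_mul_div, one_mul, div_le_one (by positivity)]; exact this⟩
  have hBeval : ∀ i u, (β i).eval u = (1 - (1/M^2) * (u - t i)^2)^Nb := by
    intro i u; simp [hβ]
  have hB01 : ∀ i, ∀ u ∈ Set.Icc a b, 0 ≤ (β i).eval u ∧ (β i).eval u ≤ 1 := by
    intro i u hu
    obtain ⟨_, hw1⟩ := habs i u hu
    have hw0 : 0 ≤ (1/M^2) * (u - t i)^2 := by positivity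
    rw [hBeval]
    exact ⟨pow_nonneg (by linarith) _, pow_le_one₀ (by linarith) (by linarith)⟩
  have hfact01 : ∀ i, ∀ u ∈ Set.Icc a b,
      0 ≤ ((1 - β i)^m).eval u ∧ ((1 - β i)^m).eval u ≤ 1 := by
    intro i u hu
    obtain ⟨hb0, hb1⟩ := hB01 i u hu
    rw [eval_pow, eval_sub, eval_one]
    exact ⟨pow_nonneg (by linarith) _, pow_le_one₀ (by linarith) (by linarith)⟩
  have hheval : ∀ u, h.eval u = ∏ i, ((1 - β i)^m).eval u := by
    intro u; rw [hh, eval_prod]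
  have hh01 : ∀ u ∈ Set.Icc a b, 0 ≤ h.eval u ∧ h.eval u ≤ 1 := by
    intro u hu
    rw [hheval]
    exact ⟨Finset.prod_nonneg fun i _ => (hfact01 i u hu).1,
      Finset.prod_le_one (fun i _ => (hfact01 i u hu).1) (fun i _ => (hfact01 i u hu).2)⟩
  have hkey : ∀ u ∈ Set.Icc a b, 1 - h.eval u ≤ ∑ i, (m:ℝ) * ((β i).eval u) := by
    intro u hu
    calc 1 - h.eval u ≤ ∑ i, (1 - ((1 - β i)^m).eval u) := by
          rw [hheval]
          exact one_sub_prod_le _ _ fun i _ => hfact01 i u hu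
    _ ≤ ∑ i, (m:ℝ) * ((β i).eval u) := by
        refine Finset.sum_le_sum fun i _ => ?_
        obtain ⟨hb0, hb1⟩ := hB01 i u hu
        have hbern := one_add_mul_le_pow (a := -((β i).eval u)) (by linarith) m
        rw [eval_pow, eval_sub, eval_one]
        have e : (1:ℝ) + -((β i).eval u) = 1 - (β i).eval u := by ring
        rw [e] at hbern
        nlinarith
  -- rho bound
  obtain ⟨rho, hrho⟩ : ∃ rho : Fin (n+1) → ℝ → ℝ,
      rho = fun i u => M^2/(M^2 + Nb*(u - t i)^2) := ⟨_, rfl⟩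
  have hrho_cont : ∀ i, Continuous (rho i) := by
    intro i
    rw [hrho]
    apply Continuous.div continuous_const (by fun_prop)
    intro u
    have h1 : (0:ℝ) ≤ (Nb:ℝ)*(u - t i)^2 := mul_nonneg (Nat.cast_nonneg _) (sq_nonneg _)
    have h2 : (0:ℝ) < M^2 := by positivity
    nlinarith
  have hBrho : ∀ i, ∀ u ∈ Set.Icc a b, (β i).eval u ≤ rho i u := by
    intro i u hu
    obtain ⟨_, hw1⟩ := habs i u hu
    set w : ℝ := (1/M^2) * (u - t i)^2 with hwdef
    have hw0 : 0 ≤ w := by positivity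
    have h2 : (1-w)^Nb ≤ 1/(1 + (Nb:ℝ)*w) := pow_one_sub_le_inv w hw0 hw1 Nb
    rw [hBeval]
    refine le_trans h2 (le_of_eq ?_)
    rw [hrho, hwdef]
    simp only []
    field_simp
  -- FTC
  intro s hs
  have hG_hasDeriv : ∀ u, HasDerivAt (fun v => G.eval v - v) (h.eval u - 1) u := by
    intro u
    have h1 : HasDerivAt (fun v => G.eval v) ((derivative G).eval u) u := G.hasDerivAt u
    rw [hG] at h1
    exact h1.sub (hasDerivAt_id u)
  have hcont_h : Continuous fun u => h.eval u - 1 := h.continuous.sub continuous_const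
  have hcont_h2 : Continuous fun u => 1 - h.eval u := continuous_const.sub h.continuous
  have has : a ≤ s := hs.1
  have hsb : s ≤ b := hs.2
  have hsubs : Set.Icc a s ⊆ Set.Icc a b := Set.Icc_subset_Icc_right hsb
  have hsubs2 : Set.Icc s b ⊆ Set.Icc a b := Set.Icc_subset_Icc_left has
  have hFTC : ∫ u in a..s, (h.eval u - 1) = (G.eval s - s) - (G.eval a - a) :=
    intervalIntegral.integral_eq_sub_of_hasDerivAt (fun u _ => hG_hasDeriv u)
      (hcont_h.intervalIntegrable _ _)
  have hgs : g.eval s - s = ∫ u in a..s, (h.eval u - 1) := by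
    rw [hgdef, eval_sub, eval_C, hFTC]; ring
  have e1 : ∫ u in a..s, (h.eval u - 1) = -∫ u in a..s, (1 - h.eval u) := by
    rw [← intervalIntegral.integral_neg]
    apply intervalIntegral.integral_congr
    intro u _
    simp
  have hI1nonneg : 0 ≤ ∫ u in a..s, (1 - h.eval u) :=
    intervalIntegral.integral_nonneg has
      (fun u hu => by have := (hh01 u (hsubs hu)).2; linarith)
  have habs1 : |g.eval s - s| = ∫ u in a..s, (1 - h.eval u) := by
    rw [hgs, e1, abs_neg, abs_of_nonneg hI1nonneg]
  have hmono1 : ∫ u in a..s, (1 - h.eval u) ≤ ∫ u in a..b, (1 - h.eval u) := by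
    have hadd := intervalIntegral.integral_add_adjacent_intervals
      (hcont_h2.intervalIntegrable (μ := MeasureTheory.volume) a s)
      (hcont_h2.intervalIntegrable (μ := MeasureTheory.volume) s b)
    have h2 : 0 ≤ ∫ u in s..b, (1 - h.eval u) :=
      intervalIntegral.integral_nonneg hsb
        (fun u hu => by have := (hh01 u (hsubs2 hu)).2; linarith)
    linarith
  have hrho_sum_cont : Continuous fun u => ∑ i, (m:ℝ) * rho i u := by
    apply continuous_finset_sum
    intro i _
    exact continuous_const.mul (hrho_cont i)
  have hmono2 : ∫ u in a..b, (1 - h.eval u) ≤ ∫ u in a..b, ∑ i, (m:ℝ) * rho i u := by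
    apply intervalIntegral.integral_mono_on hab (hcont_h2.intervalIntegrable a b)
      (hrho_sum_cont.intervalIntegrable a b)
    intro u hu
    calc 1 - h.eval u ≤ ∑ i, (m:ℝ) * ((β i).eval u) := hkey u hu
    _ ≤ ∑ i, (m:ℝ) * rho i u := by
        refine Finset.sum_le_sum fun i _ => ?_
        exact mul_le_mul_of_nonneg_left (hBrho i u hu) (Nat.cast_nonneg _)
  have hsplit : ∫ u in a..b, ∑ i, (m:ℝ) * rho i u = ∑ i, ∫ u in a..b, (m:ℝ) * rho i u :=
    intervalIntegral.integral_finset_sum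
      (fun i _ => (continuous_const.mul (hrho_cont i)).intervalIntegrable a b)
  have hMdivpos : 0 < M / Real.sqrt Nb := div_pos hM0 hsqrtpos
  have hrho_int : ∀ i, ∫ u in a..b, rho i u ≤ M / Real.sqrt Nb * Real.pi := by
    intro i
    set c : ℝ := Real.sqrt Nb / M with hcdef
    have hc : 0 < c := div_pos hsqrtpos hM0
    have hsq : (Real.sqrt Nb)^2 = (Nb:ℝ) := Real.sq_sqrt hNbpos.le
    have hφ : ∀ u : ℝ, HasDerivAt (fun v => (M / Real.sqrt Nb) * Real.arctan (c * (v - t i)))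
        (rho i u) u := by
      intro u
      have inner : HasDerivAt (fun v : ℝ => c * (v - t i)) c u := by
        simpa using ((hasDerivAt_id u).sub_const (t i)).const_mul c
      have harc : HasDerivAt (fun v : ℝ => Real.arctan (c * (v - t i)))
          (1/(1 + (c * (u - t i))^2) * c) u := (Real.hasDerivAt_arctan _).comp u inner
      have h5 := harc.const_mul (M / Real.sqrt Nb)
      have heq : (M / Real.sqrt Nb) * (1/(1 + (c * (u - t i))^2) * c) = rho i u := by
        rw [hrho, hcdef]
        have hs0 : Real.sqrt Nb ≠ 0 := ne_of_gt hsqrtpos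
        have hM0' : M ≠ 0 := ne_of_gt hM0
        have hden : (0:ℝ) < 1 + (Real.sqrt Nb / M * (u - t i))^2 := by positivity
        have hden2 : (0:ℝ) < M^2 + (Nb:ℝ)*(u - t i)^2 := by positivity
        field_simp
        ring_nf
        linear_combination (-(u - t i)^2) * hsq
      rw [heq] at h5
      exact h5
    have hint : ∫ u in a..b, rho i u
        = (M / Real.sqrt Nb) * Real.arctan (c * (b - t i))
          - (M / Real.sqrt Nb) * Real.arctan (c * (a - t i)) :=
      intervalIntegral.integral_eq_sub_of_hasDerivAt (fun u _ => hφ u)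
        ((hrho_cont i).intervalIntegrable a b)
    rw [hint]
    have h1 := Real.arctan_lt_pi_div_two (c * (b - t i))
    have h2 := Real.neg_pi_div_two_lt_arctan (c * (a - t i))
    have h3 : Real.arctan (c * (b - t i)) - Real.arctan (c * (a - t i)) ≤ Real.pi := by
      linarith
    calc (M / Real.sqrt Nb) * Real.arctan (c * (b - t i))
          - (M / Real.sqrt Nb) * Real.arctan (c * (a - t i))
        = (M / Real.sqrt Nb) * (Real.arctan (c * (b - t i)) - Real.arctan (c * (a - t i))) := by
          ring
    _ ≤ (M / Real.sqrt Nb) * Real.pi := mul_le_mul_of_nonneg_left h3 hMdivpos.le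
  have hfinal : ∑ i, ∫ u in a..b, (m:ℝ) * rho i u ≤ CC / Real.sqrt Nb := by
    have step : ∀ i : Fin (n+1), ∫ u in a..b, (m:ℝ) * rho i u
        ≤ (m:ℝ) * (M / Real.sqrt Nb * Real.pi) := by
      intro i
      rw [intervalIntegral.integral_const_mul]
      exact mul_le_mul_of_nonneg_left (hrho_int i) (Nat.cast_nonneg _)
    calc ∑ i, ∫ u in a..b, (m:ℝ) * rho i u
        ≤ ∑ _i : Fin (n+1), (m:ℝ) * (M / Real.sqrt Nb * Real.pi) := Finset.sum_le_sum fun i _ => step i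
    _ = ((n:ℝ)+1) * ((m:ℝ) * (M / Real.sqrt Nb * Real.pi)) := by
        rw [Finset.sum_const, Finset.card_univ, Fintype.card_fin, nsmul_eq_mul]
        push_cast; ring
    _ = CC / Real.sqrt Nb := by
        rw [hCC]; field_simp
  calc |g.eval s - s| = ∫ u in a..s, (1 - h.eval u) := habs1
  _ ≤ ∫ u in a..b, (1 - h.eval u) := hmono1
  _ ≤ ∫ u in a..b, ∑ i, (m:ℝ) * rho i u := hmono2
  _ = ∑ i, ∫ u in a..b, (m:ℝ) * rho i u := hsplit
  _ ≤ CC / Real.sqrt Nb := hfinal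
  _ ≤ η := hsqrt

lemma poly_eval_abs_le (p : ℝ[X]) (R y : ℝ) (hy : |y| ≤ R) :
    |p.eval y| ≤ ∑ k ∈ Finset.range (p.natDegree+1), |p.coeff k| * R^k := by
  rw [p.eval_eq_sum_range]
  refine le_trans (Finset.abs_sum_le_sum_abs _ _) (Finset.sum_le_sum fun k _ => ?_)
  rw [abs_mul, abs_pow]
  exact mul_le_mul_of_nonneg_left (pow_le_pow_left₀ (abs_nonneg _) hy k) (abs_nonneg _)

lemma poly_lipschitz (p : ℝ[X]) (R u v : ℝ) (hu : |u| ≤ R) (hv : |v| ≤ R) :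
    |p.eval u - p.eval v|
      ≤ (∑ k ∈ Finset.range (p.derivative.natDegree+1), |p.derivative.coeff k| * R^k)
        * |u - v| := by
  have hb : ∀ y ∈ Set.Icc (-R) R, ‖deriv (fun x => p.eval x) y‖
      ≤ ∑ k ∈ Finset.range (p.derivative.natDegree+1), |p.derivative.coeff k| * R^k := by
    intro y hy
    rw [Polynomial.deriv, Real.norm_eq_abs]
    exact poly_eval_abs_le _ _ _ (abs_le.mpr ⟨hy.1, hy.2⟩)
  have := Convex.norm_image_sub_le_of_norm_deriv_le
    (fun y _ => p.differentiableAt) hb (convex_Icc (-R) R)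
    (abs_le.mp hv) (abs_le.mp hu)
  simpa [Real.norm_eq_abs] using this

/-- `X`-valued polynomials whose derivatives of orders `1,…,m` vanish at the distinct
points `t₀,…,tₙ` of `[a,b]` are uniformly dense in `C([a,b], X)`. -/
theorem dense_poly_vanishing_derivs (X : Type*) [NormedAddCommGroup X]
    [NormedSpace ℝ X] [CompleteSpace X]
    (a b : ℝ) (n m : ℕ) (t : Fin (n + 1) → ℝ) (ht : Function.Injective t)
    (htmem : ∀ i, t i ∈ Set.Icc a b)
    (f : ℝ → X) (hf : ContinuousOn f (Set.Icc a b)) (ε : ℝ) (hε : 0 < ε) :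
    ∃ (N : ℕ) (c : ℕ → X),
      (∀ (i : Fin (n + 1)) (j : ℕ), 1 ≤ j → j ≤ m →
        iteratedDeriv j (fun s : ℝ => ∑ k ∈ Finset.range N, s ^ k • c k) (t i) = 0) ∧
      ∀ s ∈ Set.Icc a b, ‖f s - ∑ k ∈ Finset.range N, s ^ k • c k‖ ≤ ε := by
  have hab : a ≤ b := le_trans (htmem 0).1 (htmem 0).2
  have hpowform : ∀ (N : ℕ) (c : ℕ → X) (j : ℕ),
      iteratedDeriv j (fun s : ℝ => ∑ k ∈ Finset.range N, s ^ k • c k)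
      = fun s => ∑ k ∈ Finset.range N,
          ((⇑derivative)^[j] (Polynomial.X^k : ℝ[X])).eval s • c k := by
    intro N c j
    have e : (fun s : ℝ => ∑ k ∈ Finset.range N, s ^ k • c k)
        = fun s => ∑ k ∈ Finset.range N, ((Polynomial.X^k : ℝ[X]).eval s) • c k := by
      funext s; simp
    rw [e, iterDeriv_sum_eval_smul]
  rcases lt_or_ge a b with hlt | hge
  case inr =>
    -- a = b
    have haeb : a = b := le_antisymm hab hge
    refine ⟨1, fun _ => f a, ?_, ?_⟩
    · intro i j hj1 _
      rw [congrFun (hpowform 1 (fun _ => f a) j) (t i)]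
      obtain ⟨j', rfl⟩ : ∃ j', j = j' + 1 := ⟨j - 1, by omega⟩
      simp [Function.iterate_succ_apply, Polynomial.iterate_derivative_zero]
    · intro s hs
      have : s = a := le_antisymm (haeb ▸ hs.2) hs.1
      subst this
      simpa using hε.le
  case inl =>
    obtain ⟨K, q, x, hW⟩ := vector_weierstrass a b hlt f hf (ε/2) (by positivity)
    obtain ⟨R, hR⟩ : ∃ R : ℝ, R = |a| + |b| + 1 := ⟨_, rfl⟩
    have hR0 : 0 ≤ R := by rw [hR]; positivity
    obtain ⟨D, hD⟩ : ∃ D : ℕ → ℝ, D = fun l =>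
        ∑ k ∈ Finset.range ((q l).derivative.natDegree+1), |(q l).derivative.coeff k| * R^k :=
      ⟨_, rfl⟩
    have hD0 : ∀ l, 0 ≤ D l := by
      intro l; rw [hD]
      exact Finset.sum_nonneg fun k _ => mul_nonneg (abs_nonneg _) (pow_nonneg hR0 _)
    obtain ⟨L, hL⟩ : ∃ L : ℝ, L = ∑ l ∈ Finset.range K, D l * ‖x l‖ := ⟨_, rfl⟩
    have hL0 : 0 ≤ L := by
      rw [hL]
      exact Finset.sum_nonneg fun l _ => mul_nonneg (hD0 l) (norm_nonneg _)
    obtain ⟨η, hηdef⟩ : ∃ η : ℝ, η = min 1 (ε/(2*(L+1))) := ⟨_, rfl⟩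
    have hη0 : 0 < η := by
      rw [hηdef]
      exact lt_min one_pos (by positivity)
    have hη1 : η ≤ 1 := by rw [hηdef]; exact min_le_left _ _
    have hη2 : η ≤ ε/(2*(L+1)) := by rw [hηdef]; exact min_le_right _ _
    obtain ⟨g, hgdvd, hgclose⟩ := exists_good_g a b hab n m t htmem η hη0
    obtain ⟨Q, hQ⟩ : ∃ Q : ℕ → ℝ[X], Q = fun l => (q l).comp g := ⟨_, rfl⟩
    have hQdvd : ∀ (i : Fin (n+1)) (l : ℕ), (Polynomial.X - C (t i))^m ∣ derivative (Q l) := by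
      intro i l
      rw [hQ]
      simp only [derivative_comp]
      exact (hgdvd i).mul_right _
    obtain ⟨N, hN⟩ : ∃ N : ℕ, N = (∑ l ∈ Finset.range K, (Q l).natDegree) + 1 := ⟨_, rfl⟩
    have hdeg : ∀ l ∈ Finset.range K, (Q l).natDegree < N := by
      intro l hl
      rw [hN]
      exact Nat.lt_succ_of_le
        (Finset.single_le_sum (f := fun l => (Q l).natDegree) (fun j _ => Nat.zero_le _) hl)
    refine ⟨N, fun k => ∑ l ∈ Finset.range K, ((Q l).coeff k) • x l, ?_, ?_⟩
    · have hfun : (fun s : ℝ => ∑ k ∈ Finset.range N, s ^ k •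
          ∑ l ∈ Finset.range K, ((Q l).coeff k) • x l)
          = fun s => ∑ l ∈ Finset.range K, (Q l).eval s • x l := by
        funext s
        have e1 : ∀ k, s ^ k • ∑ l ∈ Finset.range K, ((Q l).coeff k) • x l
            = ∑ l ∈ Finset.range K, (((Q l).coeff k) * s ^ k) • x l := by
          intro k
          rw [Finset.smul_sum]
          refine Finset.sum_congr rfl fun l _ => ?_
          rw [smul_smul, mul_comm]
        rw [Finset.sum_congr rfl fun k _ => e1 k, Finset.sum_comm]
        refine Finset.sum_congr rfl fun l hl => ?_
        rw [eval_eq_sum_range' (hdeg l hl), Finset.sum_smul]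
      intro i j hj1 hjm
      rw [hfun, congrFun (iterDeriv_sum_eval_smul j K Q x) (t i)]
      refine Finset.sum_eq_zero fun l _ => ?_
      rw [eval_iter_deriv_zero (hQdvd i l) hj1 hjm, zero_smul]
    · intro s hs
      have hfun : ∑ k ∈ Finset.range N, s ^ k •
          ∑ l ∈ Finset.range K, ((Q l).coeff k) • x l
          = ∑ l ∈ Finset.range K, (Q l).eval s • x l := by
        have e1 : ∀ k, s ^ k • ∑ l ∈ Finset.range K, ((Q l).coeff k) • x l
            = ∑ l ∈ Finset.range K, (((Q l).coeff k) * s ^ k) • x l := by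
          intro k
          rw [Finset.smul_sum]
          refine Finset.sum_congr rfl fun l _ => ?_
          rw [smul_smul, mul_comm]
        rw [Finset.sum_congr rfl fun k _ => e1 k, Finset.sum_comm]
        refine Finset.sum_congr rfl fun l hl => ?_
        rw [eval_eq_sum_range' (hdeg l hl), Finset.sum_smul]
      rw [hfun]
      have hgs := hgclose s hs
      have hsR' : |s| ≤ |a| + |b| := by
        rw [abs_le]
        constructor
        · have := neg_abs_le a; linarith [hs.1, abs_nonneg b]
        · have := le_abs_self b; linarith [hs.2, abs_nonneg a]
      have hsR : |s| ≤ R := by rw [hR]; linarith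
      have hgR : |g.eval s| ≤ R := by
        have h1 : |g.eval s| ≤ |s| + |g.eval s - s| := by
          have := abs_add_le s (g.eval s - s)
          simpa using this
        rw [hR]
        linarith [hgs, hη1]
      have hQeval : ∀ l, (Q l).eval s = (q l).eval (g.eval s) := by
        intro l; rw [hQ]; simp [eval_comp]
      have split : f s - ∑ l ∈ Finset.range K, (Q l).eval s • x l
          = (f s - ∑ l ∈ Finset.range K, (q l).eval s • x l)
            + ∑ l ∈ Finset.range K, ((q l).eval s - (q l).eval (g.eval s)) • x l := by
        have e0 : ∑ l ∈ Finset.range K, (Q l).eval s • x l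
            = ∑ l ∈ Finset.range K, (q l).eval (g.eval s) • x l :=
          Finset.sum_congr rfl fun l _ => by rw [hQeval]
        have e2 : ∑ l ∈ Finset.range K, ((q l).eval s - (q l).eval (g.eval s)) • x l
            = ∑ l ∈ Finset.range K, (q l).eval s • x l
              - ∑ l ∈ Finset.range K, (q l).eval (g.eval s) • x l := by
          rw [← Finset.sum_sub_distrib]
          exact Finset.sum_congr rfl fun l _ => sub_smul _ _ _
        rw [e0, e2]
        abel
      rw [split]
      have bnd2 : ‖∑ l ∈ Finset.range K, ((q l).eval s - (q l).eval (g.eval s)) • x l‖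
          ≤ L * η := by
        refine le_trans (norm_sum_le _ _) ?_
        have step : ∀ l ∈ Finset.range K,
            ‖((q l).eval s - (q l).eval (g.eval s)) • x l‖ ≤ (D l * ‖x l‖) * η := by
          intro l _
          rw [norm_smul, Real.norm_eq_abs]
          have hlip := poly_lipschitz (q l) R s (g.eval s) hsR hgR
          have h2 : |s - g.eval s| ≤ η := by
            rw [abs_sub_comm]; exact hgs
          have h3 : |(q l).eval s - (q l).eval (g.eval s)| ≤ D l * η := by
            calc |(q l).eval s - (q l).eval (g.eval s)| ≤ D l * |s - g.eval s| := by
                  rw [hD]; exact hlip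
            _ ≤ D l * η := mul_le_mul_of_nonneg_left h2 (hD0 l)
          calc |(q l).eval s - (q l).eval (g.eval s)| * ‖x l‖ ≤ (D l * η) * ‖x l‖ :=
                mul_le_mul_of_nonneg_right h3 (norm_nonneg _)
          _ = (D l * ‖x l‖) * η := by ring
        refine le_trans (Finset.sum_le_sum step) ?_
        rw [← Finset.sum_mul, hL]
      have hLη : L * η ≤ ε/2 := by
        have h1 : L * η ≤ L * (ε/(2*(L+1))) := mul_le_mul_of_nonneg_left hη2 hL0
        have h2 : L * (ε/(2*(L+1))) ≤ ε/2 := by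
          rw [mul_div_assoc']
          rw [div_le_div_iff₀ (by positivity) (by norm_num : (0:ℝ) < 2)]
          nlinarith
        linarith
      calc ‖(f s - ∑ l ∈ Finset.range K, (q l).eval s • x l)
            + ∑ l ∈ Finset.range K, ((q l).eval s - (q l).eval (g.eval s)) • x l‖
          ≤ ‖f s - ∑ l ∈ Finset.range K, (q l).eval s • x l‖
            + ‖∑ l ∈ Finset.range K, ((q l).eval s - (q l).eval (g.eval s)) • x l‖ :=
            norm_add_le _ _
      _ ≤ ε/2 + L * η := add_le_add (hW s hs) bnd2
      _ ≤ ε/2 + ε/2 := by linarith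
      _ = ε := by ring
end

section
/- Let a ≤ t₀, ..., tₙ ≤ b be distinct reals and X a Banach space. The set of restrictions to [a,b] of X-valued polynomials f with f(t_i) = 0 for all i is uniformly dense in {f ∈ C([a,b], X) : f(t_i) = 0 for all i}. -/
open Finset Polynomial

section Aux

variable {X : Type*} [NormedAddCommGroup X] [NormedSpace ℝ X]

/-- A finite sum of (real polynomial) • (vector) can be written in coefficient form. -/
lemma repr_poly_smul {ι : Type*} (s : Finset ι) (p : ι → Polynomial ℝ) (v : ι → X) :
    ∃ (N : ℕ) (c : ℕ → X), ∀ x : ℝ,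
      ∑ k ∈ Finset.range N, x ^ k • c k = ∑ j ∈ s, (p j).eval x • v j := by
  refine ⟨(s.sup fun j => (p j).natDegree) + 1,
    fun k => ∑ j ∈ s, (p j).coeff k • v j, fun x => ?_⟩
  simp_rw [Finset.smul_sum]
  rw [Finset.sum_comm]
  refine Finset.sum_congr rfl fun j hj => ?_
  rw [Polynomial.eval_eq_sum_range'
    (lt_of_le_of_lt (Finset.le_sup (f := fun j => (p j).natDegree) hj) (Nat.lt_succ_self _)), Finset.sum_smul]
  refine Finset.sum_congr rfl fun k _ => ?_
  rw [smul_smul, mul_comm]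

/-- Vector-valued Weierstrass approximation on `[a,b]`. -/
lemma vec_weierstrass (a b : ℝ) (f : ℝ → X) (hf : ContinuousOn f (Set.Icc a b))
    {ε : ℝ} (hε : 0 < ε) :
    ∃ (M : ℕ) (p : ℕ → Polynomial ℝ) (v : ℕ → X),
      ∀ x ∈ Set.Icc a b, ‖f x - ∑ j ∈ Finset.range M, (p j).eval x • v j‖ ≤ ε := by
  rcases lt_or_ge b a with hba | hab
  · exact ⟨0, fun _ => 0, fun _ => 0, fun x hx => absurd hx (by
      rw [Set.Icc_eq_empty (not_le.mpr hba)]; exact Set.notMem_empty x)⟩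
  rcases eq_or_lt_of_le hab with heq | hab
  · refine ⟨1, fun _ => 1, fun _ => f a, fun x hx => ?_⟩
    obtain ⟨h1, h2⟩ := hx
    have hxa : x = a := le_antisymm (heq ▸ h2) h1
    simp [hxa]
    exact hε.le
  -- main case a < b
  have huc : UniformContinuousOn f (Set.Icc a b) :=
    isCompact_Icc.uniformContinuousOn_of_continuous hf
  rw [Metric.uniformContinuousOn_iff] at huc
  obtain ⟨δ, hδ, hδf⟩ := huc (ε / 2) (by positivity)
  obtain ⟨m, hm⟩ := exists_nat_gt ((b - a) / δ)
  have hm0 : 0 < m := by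
    have : (0 : ℝ) < m := lt_of_le_of_lt (div_nonneg (by linarith) hδ.le) hm
    exact_mod_cast this
  have hm0' : (0 : ℝ) < m := by exact_mod_cast hm0
  set h : ℝ := (b - a) / m with hh_def
  have hh : 0 < h := div_pos (by linarith) hm0'
  have hhδ : h < δ := by
    have h1 : b - a < m * δ := (div_lt_iff₀ hδ).mp hm
    rw [hh_def, div_lt_iff₀ hm0']
    linarith
  set S : ℕ → ℝ := fun j => a + j * h with hS_def
  have hS : ∀ j : ℕ, S j = a + j * h := fun j => rfl
  have hSm : S m = b := by
    rw [hS, hh_def]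
    field_simp
    ring
  have hS_mem : ∀ j ≤ m, S j ∈ Set.Icc a b := by
    intro j hj
    constructor
    · rw [hS]; nlinarith [hh.le, (Nat.cast_nonneg j : (0:ℝ) ≤ j)]
    · rw [← hSm, hS, hS, add_le_add_iff_left]
      have : (j : ℝ) ≤ m := by exact_mod_cast hj
      nlinarith
  have hSsucc : ∀ j : ℕ, S (j + 1) = S j + h := by
    intro j; rw [hS, hS]; push_cast; ring
  set φ : ℕ → ℝ → ℝ := fun j x => max 0 (1 - |x - S j| / h) with hφ_def
  have hφ : ∀ j x, φ j x = max 0 (1 - |x - S j| / h) := fun _ _ => rfl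
  have hφ_nonneg : ∀ j x, 0 ≤ φ j x := fun j x => le_max_left _ _
  have hφ_cont : ∀ j, Continuous (φ j) := by
    intro j
    exact continuous_const.max
      (continuous_const.sub (((continuous_id.sub continuous_const).abs).div_const h))
  have hφ_zero : ∀ j x, h ≤ |x - S j| → φ j x = 0 := by
    intro j x hx
    have h0 : 1 - |x - S j| / h ≤ 0 := by
      have : 1 ≤ |x - S j| / h := (one_le_div hh).mpr hx
      linarith
    rw [hφ]
    exact max_eq_left h0
  -- scalar approximations of the hat functions
  have hP : ∀ j, ∃ q : ℝ[X], ∀ x ∈ Set.Icc a b,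
      |q.eval x - φ j x| < ε / (2 * (m + 1) * (1 + ‖f (S j)‖)) := by
    intro j
    apply exists_polynomial_near_of_continuousOn a b (φ j) (hφ_cont j).continuousOn
    have : (0:ℝ) < 1 + ‖f (S j)‖ := by positivity
    positivity
  choose q hq using hP
  refine ⟨m + 1, q, fun j => f (S j), fun x hx => ?_⟩
  obtain ⟨hx1, hx2⟩ := hx
  -- the index of the subinterval containing x
  set j0 : ℕ := min ⌊(x - a) / h⌋₊ (m - 1) with hj0_def
  have hj0m : j0 + 1 ≤ m := by
    have : j0 ≤ m - 1 := min_le_right _ _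
    omega
  have hle : S j0 ≤ x := by
    have h1 : (j0 : ℝ) ≤ (x - a) / h := by
      refine le_trans ?_ (Nat.floor_le (div_nonneg (by linarith) hh.le))
      exact_mod_cast min_le_left _ _
    have := (le_div_iff₀ hh).mp h1
    rw [hS]; linarith
  have hge : x ≤ S (j0 + 1) := by
    rcases le_or_gt ⌊(x - a) / h⌋₊ (m - 1) with hc | hc
    · have hj0 : j0 = ⌊(x - a) / h⌋₊ := min_eq_left hc
      have h1 : (x - a) / h < (j0 : ℝ) + 1 := by
        rw [hj0]; exact Nat.lt_floor_add_one _
      have := (div_lt_iff₀ hh).mp h1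
      rw [hS]; push_cast; linarith
    · have hj0 : j0 = m - 1 := min_eq_right hc.le
      have : j0 + 1 = m := by omega
      rw [this, hSm]; exact hx2
  have hSj0 : S j0 ∈ Set.Icc a b := hS_mem j0 (by omega)
  have hSj1 : S (j0 + 1) ∈ Set.Icc a b := hS_mem (j0 + 1) hj0m
  -- the hat sum reduces to two terms
  have hsub : ({j0, j0 + 1} : Finset ℕ) ⊆ Finset.range (m + 1) := by
    intro j hj
    simp only [Finset.mem_insert, Finset.mem_singleton] at hj
    rcases hj with rfl | rfl <;> simp [Finset.mem_range] <;> omega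
  have hz : ∀ j ∈ Finset.range (m + 1), j ∉ ({j0, j0 + 1} : Finset ℕ) →
      φ j x • f (S j) = 0 := by
    intro j _ hj
    simp only [Finset.mem_insert, Finset.mem_singleton, not_or] at hj
    obtain ⟨hj1, hj2⟩ := hj
    have habs : h ≤ |x - S j| := by
      rcases Nat.lt_or_ge j j0 with hlt | hge'
      · have hd : S j0 - S j = ((j0 : ℝ) - j) * h := by
          simp only [hS_def]; ring
        have h1 : (1 : ℝ) ≤ (j0 : ℝ) - j := by
          have : (j : ℝ) + 1 ≤ j0 := by exact_mod_cast hlt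
          linarith
        have : h ≤ x - S j := by nlinarith
        rw [abs_of_nonneg (by linarith)]; exact this
      · have hj2' : j0 + 2 ≤ j := by omega
        have hd : S j - S (j0 + 1) = ((j : ℝ) - (j0 + 1)) * h := by
          rw [hS, hS]; push_cast; ring
        have h1 : (1 : ℝ) ≤ (j : ℝ) - (j0 + 1) := by
          have : ((j0 : ℝ) + 1) + 1 ≤ j := by exact_mod_cast hj2'
          linarith
        have : h ≤ S j - x := by nlinarith
        rw [abs_of_nonpos (by linarith), neg_sub]; exact this
    rw [hφ_zero j x habs, zero_smul]
  have hsplit : ∑ j ∈ Finset.range (m + 1), φ j x • f (S j)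
      = φ j0 x • f (S j0) + φ (j0 + 1) x • f (S (j0 + 1)) := by
    rw [← Finset.sum_subset hsub hz, Finset.sum_pair (Nat.ne_of_lt (Nat.lt_succ_self j0))]
  have hkey : S (j0 + 1) = S j0 + h := hSsucc j0
  have hxle : x - S j0 ≤ h := by
    have h' := hge
    rw [hkey] at h'
    linarith
  have hxle' : S (j0 + 1) - x ≤ h := by
    rw [hkey]; linarith
  have hφ0 : φ j0 x = (S (j0 + 1) - x) / h := by
    rw [hφ, abs_of_nonneg (by linarith : (0:ℝ) ≤ x - S j0), max_eq_right, hkey]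
    · field_simp; ring
    · have h2 : (x - S j0) / h ≤ 1 := (div_le_one hh).mpr hxle
      linarith
  have hφ1 : φ (j0 + 1) x = (x - S j0) / h := by
    rw [hφ, abs_of_nonpos (by linarith : x - S (j0 + 1) ≤ 0), neg_sub, max_eq_right, hkey]
    · field_simp; ring
    · have h2 : (S (j0 + 1) - x) / h ≤ 1 := (div_le_one hh).mpr hxle'
      linarith
  have hsum1 : φ j0 x + φ (j0 + 1) x = 1 := by
    rw [hφ0, hφ1, hkey]
    field_simp
    ring
  -- distance bounds
  have hd0 : ‖f x - f (S j0)‖ ≤ ε / 2 := by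
    have hd : dist x (S j0) < δ := by
      rw [Real.dist_eq, abs_of_nonneg (by linarith)]
      calc x - S j0 ≤ h := hxle
      _ < δ := hhδ
    have := hδf x ⟨hx1, hx2⟩ (S j0) hSj0 hd
    rw [dist_eq_norm] at this
    exact this.le
  have hd1 : ‖f x - f (S (j0 + 1))‖ ≤ ε / 2 := by
    have hd : dist x (S (j0 + 1)) < δ := by
      rw [Real.dist_eq, abs_of_nonpos (by linarith), neg_sub]
      calc S (j0 + 1) - x ≤ h := hxle'
      _ < δ := hhδ
    have := hδf x ⟨hx1, hx2⟩ (S (j0 + 1)) hSj1 hd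
    rw [dist_eq_norm] at this
    exact this.le
  -- part 1: hat approximation
  have part1 : ‖f x - ∑ j ∈ Finset.range (m + 1), φ j x • f (S j)‖ ≤ ε / 2 := by
    rw [hsplit]
    have hr : f x - (φ j0 x • f (S j0) + φ (j0 + 1) x • f (S (j0 + 1)))
        = φ j0 x • (f x - f (S j0)) + φ (j0 + 1) x • (f x - f (S (j0 + 1))) := by
      rw [smul_sub, smul_sub]
      nth_rewrite 1 [show f x = (φ j0 x + φ (j0 + 1) x) • f x from by rw [hsum1, one_smul]]
      rw [add_smul]; abel
    rw [hr]
    calc ‖φ j0 x • (f x - f (S j0)) + φ (j0 + 1) x • (f x - f (S (j0 + 1)))‖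
        ≤ ‖φ j0 x • (f x - f (S j0))‖ + ‖φ (j0 + 1) x • (f x - f (S (j0 + 1)))‖ :=
          norm_add_le _ _
      _ = φ j0 x * ‖f x - f (S j0)‖ + φ (j0 + 1) x * ‖f x - f (S (j0 + 1))‖ := by
          rw [norm_smul, norm_smul, Real.norm_eq_abs, Real.norm_eq_abs,
            abs_of_nonneg (hφ_nonneg _ _), abs_of_nonneg (hφ_nonneg _ _)]
      _ ≤ φ j0 x * (ε / 2) + φ (j0 + 1) x * (ε / 2) := by
          gcongr <;> first | exact hφ_nonneg _ _ | exact hd0 | exact hd1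
      _ = (φ j0 x + φ (j0 + 1) x) * (ε / 2) := by ring
      _ = ε / 2 := by rw [hsum1, one_mul]
  -- part 2: polynomial approximation of hats
  have part2 : ‖∑ j ∈ Finset.range (m + 1), φ j x • f (S j)
      - ∑ j ∈ Finset.range (m + 1), (q j).eval x • f (S j)‖ ≤ ε / 2 := by
    rw [← Finset.sum_sub_distrib]
    simp_rw [← sub_smul]
    calc ‖∑ j ∈ Finset.range (m + 1), (φ j x - (q j).eval x) • f (S j)‖
        ≤ ∑ j ∈ Finset.range (m + 1), ‖(φ j x - (q j).eval x) • f (S j)‖ :=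
          norm_sum_le _ _
      _ ≤ ∑ j ∈ Finset.range (m + 1), ε / (2 * (m + 1)) := by
          refine Finset.sum_le_sum fun j _ => ?_
          rw [norm_smul, Real.norm_eq_abs]
          have hb : |φ j x - (q j).eval x| ≤ ε / (2 * (m + 1) * (1 + ‖f (S j)‖)) := by
            rw [abs_sub_comm]
            exact (hq j x ⟨hx1, hx2⟩).le
          have hf1 : (0:ℝ) < 1 + ‖f (S j)‖ := by positivity
          calc |φ j x - (q j).eval x| * ‖f (S j)‖
              ≤ ε / (2 * (m + 1) * (1 + ‖f (S j)‖)) * (1 + ‖f (S j)‖) :=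
                mul_le_mul hb (by linarith [norm_nonneg (f (S j))]) (norm_nonneg _)
                  (by positivity)
            _ = ε / (2 * (m + 1)) := by
                rw [div_mul_eq_mul_div, div_eq_div_iff (by positivity) (by positivity)]
                ring
      _ = ε / 2 := by
          rw [Finset.sum_const, Finset.card_range, nsmul_eq_mul]
          push_cast
          rw [mul_div_assoc', div_eq_div_iff (by positivity) (by norm_num)]
          ring
  calc ‖f x - ∑ j ∈ Finset.range (m + 1), (q j).eval x • f (S j)‖
      = ‖(f x - ∑ j ∈ Finset.range (m + 1), φ j x • f (S j))
        + (∑ j ∈ Finset.range (m + 1), φ j x • f (S j)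
          - ∑ j ∈ Finset.range (m + 1), (q j).eval x • f (S j))‖ := by
        rw [sub_add_sub_cancel]
    _ ≤ ε / 2 + ε / 2 := le_trans (norm_add_le _ _) (add_le_add part1 part2)
    _ = ε := by ring

end Aux

/-- `X`-valued polynomials vanishing at the distinct points `t₀,…,tₙ` of `[a,b]` are
uniformly dense in the continuous functions vanishing there. -/
theorem dense_poly_vanishing_points (X : Type*) [NormedAddCommGroup X]
    [NormedSpace ℝ X] [CompleteSpace X]
    (a b : ℝ) (n : ℕ) (t : Fin (n + 1) → ℝ) (ht : Function.Injective t)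
    (htmem : ∀ i, t i ∈ Set.Icc a b)
    (f : ℝ → X) (hf : ContinuousOn f (Set.Icc a b)) (hf0 : ∀ i, f (t i) = 0)
    (ε : ℝ) (hε : 0 < ε) :
    ∃ (N : ℕ) (c : ℕ → X),
      (∀ i : Fin (n + 1), ∑ k ∈ Finset.range N, (t i) ^ k • c k = 0) ∧
      ∀ s ∈ Set.Icc a b, ‖f s - ∑ k ∈ Finset.range N, s ^ k • c k‖ ≤ ε := by
  classical
  -- Lagrange basis polynomials
  set L : Fin (n + 1) → Polynomial ℝ := fun i => Lagrange.basis Finset.univ t i with hL_def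
  have hLself : ∀ i, (L i).eval (t i) = 1 := fun i =>
    Lagrange.eval_basis_self (ht.injOn) (Finset.mem_univ i)
  have hLne : ∀ i k : Fin (n + 1), i ≠ k → (L i).eval (t k) = 0 := fun i k hik =>
    Lagrange.eval_basis_of_ne hik (Finset.mem_univ k)
  -- a uniform bound for the Lagrange basis on [a,b]
  obtain ⟨C, hC⟩ := isCompact_Icc.exists_bound_of_continuousOn
    (f := fun x : ℝ => ∑ i : Fin (n + 1), |(L i).eval x|)
    (Continuous.continuousOn (continuous_finset_sum Finset.univ
      fun i _ => (Polynomial.continuous (L i)).abs))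
  have hC' : ∀ x ∈ Set.Icc a b, ∑ i : Fin (n + 1), |(L i).eval x| ≤ C := by
    intro x hx
    exact le_trans (le_abs_self _) (hC x hx)
  have hC0 : 0 ≤ C := by
    refine le_trans ?_ (hC' (t 0) (htmem 0))
    exact Finset.sum_nonneg fun i _ => abs_nonneg _
  set ε' : ℝ := ε / (1 + C) with hε'_def
  have hε' : 0 < ε' := by positivity
  -- vector-valued Weierstrass approximation
  obtain ⟨M, p, v, hg⟩ := vec_weierstrass a b f hf hε'
  set g : ℝ → X := fun x => ∑ j ∈ Finset.range M, (p j).eval x • v j with hg_def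
  have hgx : ∀ x, g x = ∑ j ∈ Finset.range M, (p j).eval x • v j := fun _ => rfl
  have hgt : ∀ i, ‖g (t i)‖ ≤ ε' := by
    intro i
    have := hg (t i) (htmem i)
    rw [← hgx, hf0 i, zero_sub, norm_neg] at this
    exact this
  -- the corrected polynomial family
  obtain ⟨N, c, hc⟩ := repr_poly_smul ((Finset.range M).disjSum Finset.univ)
    (Sum.elim p fun i => -(L i)) (Sum.elim v fun i => g (t i))
  have hG : ∀ x : ℝ, ∑ k ∈ Finset.range N, x ^ k • c k
      = g x - ∑ i : Fin (n + 1), (L i).eval x • g (t i) := by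
    intro x
    rw [hc x, Finset.sum_disjSum, hgx, sub_eq_add_neg, ← Finset.sum_neg_distrib]
    congr 1
    refine Finset.sum_congr rfl fun i _ => ?_
    simp
  refine ⟨N, c, fun i => ?_, fun s hs => ?_⟩
  · rw [hG]
    rw [Finset.sum_eq_single i (fun k _ hk => by rw [hLne k i hk, zero_smul])
      (fun hi => absurd (Finset.mem_univ i) hi)]
    rw [hLself i, one_smul, sub_self]
  · rw [hG]
    have key : f s - (g s - ∑ i : Fin (n + 1), (L i).eval s • g (t i))
        = (f s - g s) + ∑ i : Fin (n + 1), (L i).eval s • g (t i) := by abel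
    rw [key]
    calc ‖(f s - g s) + ∑ i : Fin (n + 1), (L i).eval s • g (t i)‖
        ≤ ‖f s - g s‖ + ‖∑ i : Fin (n + 1), (L i).eval s • g (t i)‖ := norm_add_le _ _
      _ ≤ ε' + ∑ i : Fin (n + 1), |(L i).eval s| * ‖g (t i)‖ := by
          refine add_le_add (by rw [hgx] at *; exact hg s hs) ?_
          refine le_trans (norm_sum_le _ _) (le_of_eq ?_)
          refine Finset.sum_congr rfl fun i _ => ?_
          rw [norm_smul, Real.norm_eq_abs]
      _ ≤ ε' + ∑ i : Fin (n + 1), |(L i).eval s| * ε' := by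
          refine add_le_add_right (Finset.sum_le_sum fun i _ => ?_) _
          exact mul_le_mul_of_nonneg_left (hgt i) (abs_nonneg _)
      _ = ε' + (∑ i : Fin (n + 1), |(L i).eval s|) * ε' := by rw [Finset.sum_mul]
      _ ≤ ε' + C * ε' := by
          refine add_le_add_right (mul_le_mul_of_nonneg_right (hC' s hs) hε'.le) _
      _ = (1 + C) * ε' := by ring
      _ = ε := by
          rw [hε'_def]
          field_simp
end

section
/- For every f ∈ C([0,1], ℂ) of class C^m, points t₁, ..., tₙ ∈ [0,1], and ε > 0, there exists a polynomial g ∈ ℂ[z] such that g^(j)(t_i) = f^(j)(t_i) for all 1 ≤ i ≤ n, 0 ≤ j ≤ m, and sup_{t ∈ [0,1]} |f(t) - g(t)| ≤ ε. -/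
open Polynomial

lemma iterD_add (p q : ℂ[X]) (j : ℕ) :
    derivative^[j] (p + q) = derivative^[j] p + derivative^[j] q := by
  induction j generalizing p q with
  | zero => rfl
  | succ j ih => simp [Function.iterate_succ_apply, derivative_add, ih]

lemma vanish {s : ℂ} {k j : ℕ} (hj : j ≤ k) {P : ℂ[X]}
    (h : (X - C s) ^ (k + 1) ∣ P) : (derivative^[j] P).eval s = 0 := by
  have h2 : (X - C s) ^ (k + 1 - j) ∣ derivative^[j] P :=
    Polynomial.pow_sub_dvd_iterate_derivative_of_pow_dvd j h
  have h1 : (X - C s) ∣ derivative^[j] P :=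
    dvd_trans (dvd_pow_self _ (by omega)) h2
  obtain ⟨q, hq⟩ := h1
  simp [hq]

lemma keyfact (s : ℂ) : ∀ (k : ℕ) (w : ℂ[X]),
    (derivative^[k] ((X - C s) ^ k * w)).eval s = k.factorial * w.eval s := by
  intro k
  induction k with
  | zero => intro w; simp
  | succ k ih =>
    intro w
    rw [Function.iterate_succ_apply, derivative_mul, derivative_X_sub_C_pow]
    have e1 : (C ((k:ℂ) + 1) * (X - C s) ^ (k + 1 - 1)) * w
        = (X - C s) ^ k * (C ((k:ℂ) + 1) * w) := by
        simp only [Nat.add_sub_cancel]; ring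
    push_cast at e1 ⊢
    rw [e1, iterD_add, eval_add, ih, vanish le_rfl (dvd_mul_right _ _), add_zero]
    simp [Nat.factorial_succ]
    ring

lemma jets (s : ℂ) : ∀ (m : ℕ) (w : ℂ[X]), w.eval s ≠ 0 → ∀ (a : ℕ → ℂ),
    ∃ q : ℂ[X], ∀ j ≤ m, (derivative^[j] (w * q)).eval s = a j := by
  intro m
  induction m with
  | zero =>
    intro w hw a
    refine ⟨C (a 0 / w.eval s), ?_⟩
    intro j hj
    interval_cases j
    simp only [Function.iterate_zero, id, eval_mul, eval_C]
    field_simp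
  | succ m ih =>
    intro w hw a
    obtain ⟨q₀, hq₀⟩ := ih w hw a
    set c : ℂ := (a (m + 1) - (derivative^[m+1] (w * q₀)).eval s)
        / ((m + 1).factorial * w.eval s) with hc
    refine ⟨q₀ + C c * (X - C s) ^ (m + 1), ?_⟩
    have key : w * (q₀ + C c * (X - C s) ^ (m + 1))
        = w * q₀ + C c * ((X - C s) ^ (m + 1) * w) := by ring
    intro j hj
    rw [key, iterD_add, eval_add, iterate_derivative_C_mul, eval_mul, eval_C]
    rcases Nat.lt_succ_iff_lt_or_eq.mp (Nat.lt_succ_of_le hj) with h | h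
    · rw [hq₀ j (Nat.lt_succ_iff.mp h), vanish (Nat.lt_succ_iff.mp h) (dvd_mul_right _ _),
        mul_zero, add_zero]
    · subst h
      rw [keyfact]
      have hfac : ((m + 1).factorial : ℂ) * w.eval s ≠ 0 :=
        mul_ne_zero (Nat.cast_ne_zero.mpr (Nat.factorial_ne_zero _)) hw
      rw [hc]
      field_simp
      rw [mul_div_assoc, div_self (Nat.cast_ne_zero.mpr (Nat.factorial_ne_zero _)), mul_one]
      ring

-- complex Weierstrass on [0,1]
lemma weier (f : ℝ → ℂ) (hf : ContinuousOn f (Set.Icc (0:ℝ) 1)) (δ : ℝ) (hδ : 0 < δ) :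
    ∃ P : ℂ[X], ∀ x ∈ Set.Icc (0:ℝ) 1, ‖f x - P.eval ((x:ℝ):ℂ)‖ ≤ δ := by
  obtain ⟨p, hp⟩ := exists_polynomial_near_of_continuousOn 0 1 (fun x => (f x).re)
    (Complex.continuous_re.comp_continuousOn hf) (δ/2) (by linarith)
  obtain ⟨q, hq⟩ := exists_polynomial_near_of_continuousOn 0 1 (fun x => (f x).im)
    (Complex.continuous_im.comp_continuousOn hf) (δ/2) (by linarith)
  refine ⟨p.map (algebraMap ℝ ℂ) + C Complex.I * q.map (algebraMap ℝ ℂ), ?_⟩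
  intro x hx
  have hcast : ((x:ℝ):ℂ) = algebraMap ℝ ℂ x := rfl
  have hv : ((p.map (algebraMap ℝ ℂ) + C Complex.I * q.map (algebraMap ℝ ℂ))).eval ((x:ℝ):ℂ)
      = ((p.eval x : ℝ) : ℂ) + Complex.I * ((q.eval x : ℝ) : ℂ) := by
    rw [eval_add, eval_mul, eval_C, hcast, eval_map, eval_map, eval₂_at_apply, eval₂_at_apply]
    norm_num
  rw [hv]
  set z : ℂ := f x - (((p.eval x : ℝ) : ℂ) + Complex.I * ((q.eval x : ℝ) : ℂ)) with hz
  have hre : z.re = (f x).re - p.eval x := by simp [hz]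
  have him : z.im = (f x).im - q.eval x := by simp [hz]
  calc ‖z‖ ≤ |z.re| + |z.im| := Complex.norm_le_abs_re_add_abs_im z
    _ ≤ δ/2 + δ/2 := by
        rw [hre, him]
        have h1 := hp x hx
        have h2 := hq x hx
        apply add_le_add
        · rw [abs_sub_comm]; exact h1.le
        · rw [abs_sub_comm]; exact h2.le
    _ = δ := by ring

lemma antideriv (Q : ℂ[X]) : ∃ R : ℂ[X], derivative R = Q := by
  refine ⟨Q.sum fun k a => C (a / (k + 1)) * X ^ (k + 1), ?_⟩
  conv_rhs => rw [← Q.sum_C_mul_X_pow_eq]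
  rw [Polynomial.sum_def, Polynomial.sum_def, map_sum]
  apply Finset.sum_congr rfl
  intro k _
  rw [derivative_C_mul, derivative_X_pow, ← mul_assoc, ← C_mul]
  rw [Nat.add_sub_cancel]
  congr 1
  push_cast
  rw [div_mul_cancel₀]
  exact Nat.cast_add_one_ne_zero k

lemma CmApprox : ∀ (m : ℕ) (f : ℝ → ℂ), ContDiffOn ℝ m f (Set.Icc (0:ℝ) 1) →
    ∀ δ : ℝ, 0 < δ → ∃ P : ℂ[X], ∀ j ≤ m, ∀ x ∈ Set.Icc (0:ℝ) 1,
      ‖iteratedDerivWithin j f (Set.Icc (0:ℝ) 1) x - (derivative^[j] P).eval ((x:ℝ):ℂ)‖ ≤ δ := by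
  intro m
  induction m with
  | zero =>
    intro f hf δ hδ
    obtain ⟨P, hP⟩ := weier f hf.continuousOn δ hδ
    refine ⟨P, ?_⟩
    intro j hj x hx
    interval_cases j
    simpa [iteratedDerivWithin_zero] using hP x hx
  | succ m ih =>
    intro f hf δ hδ
    have hu : UniqueDiffOn ℝ (Set.Icc (0:ℝ) 1) := uniqueDiffOn_Icc one_pos
    have hf' : ContDiffOn ℝ m (derivWithin f (Set.Icc (0:ℝ) 1)) (Set.Icc (0:ℝ) 1) :=
      hf.derivWithin hu (by exact_mod_cast le_refl (m+1))
    obtain ⟨Q, hQ⟩ := ih (derivWithin f (Set.Icc (0:ℝ) 1)) hf' δ hδ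
    obtain ⟨R, hR⟩ := antideriv Q
    set P : ℂ[X] := R + C (f 0 - R.eval 0) with hPdef
    have hdP : derivative P = Q := by rw [hPdef, derivative_add, derivative_C, add_zero, hR]
    refine ⟨P, ?_⟩
    have hbound : ∀ y ∈ Set.Icc (0:ℝ) 1,
        ‖derivWithin f (Set.Icc (0:ℝ) 1) y - Q.eval ((y:ℝ):ℂ)‖ ≤ δ := by
      intro y hy
      simpa [iteratedDerivWithin_zero] using hQ 0 (Nat.zero_le m) y hy
    intro j hj x hx
    match j with
    | 0 =>
      have hg' : ∀ y ∈ Set.Icc (0:ℝ) 1,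
          HasDerivWithinAt (fun z : ℝ => f z - P.eval ((z:ℝ):ℂ))
            (derivWithin f (Set.Icc (0:ℝ) 1) y - Q.eval ((y:ℝ):ℂ)) (Set.Icc (0:ℝ) 1) y := by
        intro y hy
        have h1 : HasDerivWithinAt f (derivWithin f (Set.Icc (0:ℝ) 1) y) (Set.Icc (0:ℝ) 1) y :=
          (hf.differentiableOn (by simp) y
            hy).hasDerivWithinAt
        have h2 : HasDerivWithinAt (fun z : ℝ => P.eval ((z:ℝ):ℂ)) (Q.eval ((y:ℝ):ℂ))
            (Set.Icc (0:ℝ) 1) y := by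
          have := ((P.hasDerivAt ((y:ℝ):ℂ)).comp_ofReal).hasDerivWithinAt (s := Set.Icc (0:ℝ) 1)
          rwa [hdP] at this
        exact h1.sub h2
      have h0 : (0:ℝ) ∈ Set.Icc (0:ℝ) 1 := by norm_num
      have hmv := Convex.norm_image_sub_le_of_norm_hasDerivWithin_le hg' hbound
        (convex_Icc 0 1) h0 hx
      have hg0 : f 0 - P.eval (((0:ℝ):ℝ):ℂ) = 0 := by
        rw [hPdef]
        push_cast
        rw [eval_add, eval_C]
        ring
      rw [hg0, sub_zero] at hmv
      have hx1 : ‖x - 0‖ ≤ 1 := by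
        rw [sub_zero, Real.norm_eq_abs, abs_of_nonneg hx.1]
        exact hx.2
      calc ‖iteratedDerivWithin 0 f (Set.Icc (0:ℝ) 1) x - (derivative^[0] P).eval ((x:ℝ):ℂ)‖
          = ‖f x - P.eval ((x:ℝ):ℂ)‖ := by simp [iteratedDerivWithin_zero]
        _ ≤ δ * ‖x - 0‖ := hmv
        _ ≤ δ * 1 := by gcongr
        _ = δ := mul_one δ
    | (j' + 1) =>
      rw [iteratedDerivWithin_succ', Function.iterate_succ_apply, hdP]
      exact hQ j' (Nat.succ_le_succ_iff.mp hj) x hx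

/-- Simultaneous uniform approximation and Hermite interpolation: a polynomial can
match `f` and its derivatives up to order `m` at finitely many points of `[0,1]`
while uniformly approximating `f`. -/
theorem approx_with_hermite_interpolation (n m : ℕ) (f : ℝ → ℂ)
    (hf : ContDiffOn ℝ m f (Set.Icc (0 : ℝ) 1))
    (t : Fin n → ℝ) (htmem : ∀ i, t i ∈ Set.Icc (0 : ℝ) 1)
    (ε : ℝ) (hε : 0 < ε) :
    ∃ g : Polynomial ℂ,
      (∀ (i : Fin n) (j : ℕ), j ≤ m →
        (Polynomial.derivative^[j] g).eval ((t i : ℝ) : ℂ) =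
          iteratedDerivWithin j f (Set.Icc (0 : ℝ) 1) (t i)) ∧
      ∀ s ∈ Set.Icc (0 : ℝ) 1, ‖f s - g.eval ((s : ℝ) : ℂ)‖ ≤ ε := by
  classical
  set S : Finset ℝ := Finset.image t Finset.univ with hS
  -- Hermite basis polynomials
  have hEex : ∀ (s : ℝ) (j : ℕ), ∃ e : ℂ[X], s ∈ S → j ≤ m →
      ∀ s' ∈ S, ∀ j' ≤ m, (derivative^[j'] e).eval ((s':ℝ):ℂ)
        = if s' = s ∧ j' = j then 1 else 0 := by
    intro s j
    by_cases hs : s ∈ S ∧ j ≤ m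
    · obtain ⟨hsS, hjm⟩ := hs
      set w : ℂ[X] := ∏ u ∈ S.erase s, (X - C ((u:ℝ):ℂ)) ^ (m + 1) with hw
      have hwne : w.eval ((s:ℝ):ℂ) ≠ 0 := by
        rw [hw, eval_prod]
        apply Finset.prod_ne_zero_iff.mpr
        intro u hu
        rw [eval_pow, eval_sub, eval_X, eval_C]
        apply pow_ne_zero
        have hne : u ≠ s := Finset.ne_of_mem_erase hu
        intro hc
        exact hne (by exact_mod_cast (sub_eq_zero.mp hc).symm)
      obtain ⟨q, hq⟩ := jets ((s:ℝ):ℂ) m w hwne (fun j' => if j' = j then 1 else 0)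
      refine ⟨w * q, fun _ _ s' hs' j' hj' => ?_⟩
      by_cases hss : s' = s
      · subst hss
        rw [hq j' hj']
        simp
      · have hmem : s' ∈ S.erase s := Finset.mem_erase.mpr ⟨hss, hs'⟩
        have hdvd : (X - C ((s':ℝ):ℂ)) ^ (m + 1) ∣ w * q :=
          dvd_mul_of_dvd_left (Finset.dvd_prod_of_mem _ hmem) q
        rw [vanish hj' hdvd]
        simp [hss]
    · exact ⟨0, fun h1 h2 => absurd ⟨h1, h2⟩ hs⟩
  choose E hE using hEex
  -- bounds on basis polynomials
  have hMex : ∀ (s : ℝ) (j : ℕ), ∃ M : ℝ, 0 ≤ M ∧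
      ∀ x ∈ Set.Icc (0:ℝ) 1, ‖(E s j).eval ((x:ℝ):ℂ)‖ ≤ M := by
    intro s j
    obtain ⟨M, hM⟩ := isCompact_Icc.exists_bound_of_continuousOn
      (f := fun x : ℝ => (E s j).eval ((x:ℝ):ℂ))
      (((E s j).continuous).comp Complex.continuous_ofReal).continuousOn
    exact ⟨max M 0, le_max_right _ _, fun x hx => le_trans (hM x hx) (le_max_left _ _)⟩
  choose M hM0 hMb using hMex
  set B : ℝ := ∑ s ∈ S, ∑ j ∈ Finset.range (m + 1), M s j with hB
  have hB0 : 0 ≤ B :=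
    Finset.sum_nonneg fun s _ => Finset.sum_nonneg fun j _ => hM0 s j
  set δ : ℝ := ε / (2 * (1 + B)) with hδdef
  have hδ : 0 < δ := div_pos hε (by linarith)
  obtain ⟨P, hP⟩ := CmApprox m f hf δ hδ
  set a : ℝ → ℕ → ℂ := fun s j =>
    iteratedDerivWithin j f (Set.Icc (0:ℝ) 1) s - (derivative^[j] P).eval ((s:ℝ):ℂ) with ha
  set h : ℂ[X] := ∑ s ∈ S, ∑ j ∈ Finset.range (m + 1), C (a s j) * E s j with hh
  refine ⟨P + h, ?_, ?_⟩
  · intro i j hj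
    have hs₀ : t i ∈ S := Finset.mem_image_of_mem t (Finset.mem_univ i)
    have hhval : (derivative^[j] h).eval ((t i : ℝ):ℂ) = a (t i) j := by
      rw [hh, iterate_derivative_sum]
      rw [eval_finset_sum]
      rw [Finset.sum_eq_single_of_mem (t i) hs₀ ?side1]
      case side1 =>
        intro s hsS hne
        rw [iterate_derivative_sum, eval_finset_sum]
        apply Finset.sum_eq_zero
        intro j' hj'
        rw [iterate_derivative_C_mul, eval_mul, eval_C,
          hE s j' hsS (Nat.lt_succ_iff.mp (Finset.mem_range.mp hj')) (t i) hs₀ j hj]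
        simp [Ne.symm hne]
      rw [iterate_derivative_sum, eval_finset_sum]
      rw [Finset.sum_eq_single_of_mem j (Finset.mem_range.mpr (Nat.lt_succ_of_le hj)) ?side2]
      case side2 =>
        intro j' hj' hne
        rw [iterate_derivative_C_mul, eval_mul, eval_C,
          hE (t i) j' hs₀ (Nat.lt_succ_iff.mp (Finset.mem_range.mp hj')) (t i) hs₀ j hj]
        simp [Ne.symm hne]
      rw [iterate_derivative_C_mul, eval_mul, eval_C,
        hE (t i) j hs₀ hj (t i) hs₀ j hj]
      simp
    rw [iterD_add, eval_add, hhval, ha]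
    ring
  · intro x hx
    have h1 : ‖f x - P.eval ((x:ℝ):ℂ)‖ ≤ δ := by
      simpa [iteratedDerivWithin_zero] using hP 0 (Nat.zero_le m) x hx
    have h2 : ‖h.eval ((x:ℝ):ℂ)‖ ≤ δ * B := by
      rw [hh, eval_finset_sum]
      calc ‖∑ s ∈ S, (∑ j ∈ Finset.range (m+1), C (a s j) * E s j).eval ((x:ℝ):ℂ)‖
          ≤ ∑ s ∈ S, ‖(∑ j ∈ Finset.range (m+1), C (a s j) * E s j).eval ((x:ℝ):ℂ)‖ :=
            norm_sum_le _ _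
        _ ≤ ∑ s ∈ S, ∑ j ∈ Finset.range (m+1), δ * M s j := by
            apply Finset.sum_le_sum
            intro s hsS
            rw [eval_finset_sum]
            refine le_trans (norm_sum_le _ _) (Finset.sum_le_sum ?_)
            intro j hj
            rw [eval_mul, eval_C, norm_mul]
            have hjm : j ≤ m := Nat.lt_succ_iff.mp (Finset.mem_range.mp hj)
            have hsI : s ∈ Set.Icc (0:ℝ) 1 := by
              rw [hS] at hsS
              obtain ⟨i, -, rfl⟩ := Finset.mem_image.mp hsS
              exact htmem i
            have hnorm_a : ‖a s j‖ ≤ δ := hP j hjm s hsI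
            exact mul_le_mul hnorm_a (hMb s j x hx) (norm_nonneg _) hδ.le
        _ = δ * B := by rw [hB, Finset.mul_sum]; congr 1; ext s; rw [Finset.mul_sum]
    have key : ‖f x - (P + h).eval ((x:ℝ):ℂ)‖ ≤ δ + δ * B := by
      rw [eval_add]
      calc ‖f x - (P.eval ((x:ℝ):ℂ) + h.eval ((x:ℝ):ℂ))‖
          = ‖(f x - P.eval ((x:ℝ):ℂ)) - h.eval ((x:ℝ):ℂ)‖ := by ring_nf
        _ ≤ ‖f x - P.eval ((x:ℝ):ℂ)‖ + ‖h.eval ((x:ℝ):ℂ)‖ := norm_sub_le _ _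
        _ ≤ δ + δ * B := add_le_add h1 h2
    have hfin : δ + δ * B = ε / 2 := by
      rw [hδdef]
      field_simp
    rw [hfin] at key
    linarith
end

section
/- Let Ω be a compact Hausdorff space, X a Banach space, T = {s₁, ..., s_k} ⊆ Ω a finite set, B ⊆ X any subset, and X₁ ⊆ X a convex subset; let S ⊆ Ω with closure disjoint from T. Define K = {g ∈ C(Ω, X) : g(s_i) ∈ B for all i, g(S) ⊆ X₁}. Then the uniform closure of K equals {g ∈ C(Ω, X) : g(s_i) ∈ closure(B) for all i, g(closure S) ⊆ closure(X₁)}. -/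
/-- Closure of the set of continuous functions constrained to take values in `B` at
finitely many points and in a convex set `X₁` on `S`. -/
theorem closure_constraint_set (Ω X : Type*) [TopologicalSpace Ω] [CompactSpace Ω]
    [T2Space Ω] [NormedAddCommGroup X] [NormedSpace ℝ X] [CompleteSpace X]
    (k : ℕ) (s : Fin k → Ω) (hs : Function.Injective s)
    (B : Set X) (X₁ : Set X) (hX₁ : Convex ℝ X₁)
    (S : Set Ω) (hdisj : closure S ∩ Set.range s = ∅) :
    closure {g : C(Ω, X) | (∀ i, g (s i) ∈ B) ∧ ∀ x ∈ S, g x ∈ X₁} =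
      {g : C(Ω, X) | (∀ i, g (s i) ∈ closure B) ∧ ∀ x ∈ closure S, g x ∈ closure X₁} := by
  have hnotrange : ∀ x ∈ closure S, x ∉ Set.range s := by
    intro x hx hmem
    have : x ∈ closure S ∩ Set.range s := ⟨hx, hmem⟩
    rw [hdisj] at this; exact this
  apply Set.Subset.antisymm
  · -- easy direction
    have hcl : IsClosed {g : C(Ω, X) | (∀ i, g (s i) ∈ closure B) ∧
        ∀ x ∈ closure S, g x ∈ closure X₁} := by
      have : {g : C(Ω, X) | (∀ i, g (s i) ∈ closure B) ∧ ∀ x ∈ closure S, g x ∈ closure X₁} =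
          (⋂ i, (fun g : C(Ω, X) => g (s i)) ⁻¹' closure B) ∩
          (⋂ x ∈ closure S, (fun g : C(Ω, X) => g x) ⁻¹' closure X₁) := by
        ext g; simp [Set.mem_iInter]
      rw [this]
      exact IsClosed.inter
        (isClosed_iInter fun i => isClosed_closure.preimage
          (ContinuousEvalConst.continuous_eval_const _))
        (isClosed_biInter fun x _ => isClosed_closure.preimage
          (ContinuousEvalConst.continuous_eval_const _))
    refine closure_minimal ?_ hcl
    rintro g ⟨h1, h2⟩
    exact ⟨fun i => subset_closure (h1 i),
      fun x hx => map_mem_closure g.continuous hx fun y hy => h2 y hy⟩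
  · -- hard direction
    rintro g ⟨hgB, hgX⟩
    rw [Metric.mem_closure_iff]
    intro δ hδ
    set ε : ℝ := δ / (k + 3) with hεdef
    have hεpos : 0 < ε := div_pos hδ (by positivity)
    -- choose b i ∈ B close to g (s i)
    have hb : ∀ i, ∃ bi ∈ B, dist (g (s i)) bi < ε := fun i =>
      Metric.mem_closure_iff.mp (hgB i) ε hεpos
    choose b hbB hbd using hb
    -- open cover of closure S
    set U : Ω → Set Ω := fun z => g ⁻¹' Metric.ball (g z) ε ∩ (Set.range s)ᶜ with hUdef
    have hUopen : ∀ z, IsOpen (U z) :=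
      fun z => ((Metric.isOpen_ball).preimage g.continuous).inter
        (Set.finite_range s).isClosed.isOpen_compl
    have hUmem : ∀ z ∈ closure S, z ∈ U z := fun z hz =>
      ⟨Metric.mem_ball_self hεpos, hnotrange z hz⟩
    have hcov : closure S ⊆ ⋃ z ∈ closure S, U z := fun z hz =>
      Set.mem_biUnion hz (hUmem z hz)
    obtain ⟨t, htsub, htfin, htcov⟩ :=
      ((isClosed_closure (s := S)).isCompact).elim_finite_subcover_image
        (fun z _ => hUopen z) hcov
    haveI : Fintype ↑t := htfin.fintype
    -- partition of unity
    obtain ⟨f, hf⟩ := PartitionOfUnity.exists_isSubordinate (ι := ↑t)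
      (isClosed_closure (s := S)) (fun j => U ↑j) (fun j => hUopen ↑j)
      (by
        intro z hz
        rcases Set.mem_iUnion₂.mp (htcov hz) with ⟨i, hi, hz'⟩
        exact Set.mem_iUnion.mpr ⟨⟨i, hi⟩, hz'⟩)
    -- choose y j ∈ X₁ close to g j
    have hy : ∀ j : ↑t, ∃ yj ∈ X₁, dist (g ↑j) yj < ε := fun j =>
      Metric.mem_closure_iff.mp (hgX ↑j (htsub j.2)) ε hεpos
    choose y hyX hyd using hy
    -- bump functions at the points s i
    set C : Fin k → Set Ω := fun i => closure S ∪ s '' {j | j ≠ i} with hCdef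
    have hCclosed : ∀ i, IsClosed (C i) :=
      fun i => isClosed_closure.union ((Set.toFinite _).image s).isClosed
    have hCdisj : ∀ i, Disjoint (C i) {s i} := by
      intro i
      rw [Set.disjoint_singleton_right]
      rintro (h | ⟨j, hj, hji⟩)
      · exact hnotrange _ h ⟨i, rfl⟩
      · exact hj (hs hji)
    have hψ : ∀ i, ∃ ψ : C(Ω, ℝ), Set.EqOn ψ 0 (C i) ∧ Set.EqOn ψ 1 {s i} ∧
        ∀ x, ψ x ∈ Set.Icc (0 : ℝ) 1 :=
      fun i => exists_continuous_zero_one_of_isClosed (hCclosed i) isClosed_singleton (hCdisj i)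
    choose ψ hψ0 hψ1 hψmem using hψ
    -- the corrected function
    set h : C(Ω, X) := ⟨fun x => g x + (∑ j : ↑t, f j x • (y j - g x)) +
        ∑ i, ψ i x • (b i - g (s i)), by
      refine ((map_continuous g).add (continuous_finset_sum _ fun j _ =>
        ((f j).continuous.smul (continuous_const.sub (map_continuous g))))).add
        (continuous_finset_sum _ fun i _ => ((ψ i).continuous.smul continuous_const))⟩
      with hhdef
    have hhx : ∀ x, h x = g x + (∑ j : ↑t, f j x • (y j - g x)) +
        ∑ i, ψ i x • (b i - g (s i)) := fun x => rfl
    -- f j vanishes on range s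
    have hfs : ∀ (j : ↑t) (i : Fin k), f j (s i) = 0 := by
      intro j i
      apply image_eq_zero_of_notMem_tsupport
      intro hmem
      exact (hf j hmem).2 ⟨i, rfl⟩
    -- ψ vanishes on closure S
    have hψS : ∀ (i : Fin k) (x : Ω), x ∈ closure S → ψ i x = 0 :=
      fun i x hx => hψ0 i (Set.mem_union_left _ hx)
    refine ⟨h, ⟨?_, ?_⟩, ?_⟩
    · -- h (s i) = b i ∈ B
      intro i
      have h1 : (∑ j : ↑t, f j (s i) • (y j - g (s i))) = 0 := by
        simp [hfs]
      have h2 : (∑ i', ψ i' (s i) • (b i' - g (s i'))) = b i - g (s i) := by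
        rw [Finset.sum_eq_single i]
        · rw [hψ1 i rfl]; simp
        · intro i' _ hne
          have : s i ∈ C i' := Set.mem_union_right _ ⟨i, hne.symm, rfl⟩
          rw [hψ0 i' this]; simp
        · simp
      rw [hhx, h1, h2]
      simpa using hbB i
    · -- h x ∈ X₁ for x ∈ S
      intro x hx
      have hxc : x ∈ closure S := subset_closure hx
      have hsum1 : (∑ j : ↑t, f j x) = 1 := by
        rw [← finsum_eq_sum_of_fintype]; exact f.sum_eq_one hxc
      have h2 : (∑ i, ψ i x • (b i - g (s i))) = 0 := by
        simp [hψS _ _ hxc]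
      have h1 : g x + (∑ j : ↑t, f j x • (y j - g x)) = ∑ j : ↑t, f j x • y j := by
        have : (∑ j : ↑t, f j x • (y j - g x)) =
            (∑ j : ↑t, f j x • y j) - (∑ j : ↑t, f j x) • g x := by
          rw [Finset.sum_smul, ← Finset.sum_sub_distrib]
          exact Finset.sum_congr rfl fun j _ => smul_sub _ _ _
        rw [this, hsum1, one_smul]; abel
      rw [hhx, h2, add_zero, h1]
      exact hX₁.sum_mem (fun j _ => f.nonneg j x) hsum1 (fun j _ => hyX j)
    · -- distance estimate
      have hkey : dist h g ≤ (k + 2) * ε := by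
        rw [ContinuousMap.dist_le (by positivity)]
        intro x
        rw [dist_eq_norm, hhx]
        have hA : ‖∑ j : ↑t, f j x • (y j - g x)‖ ≤ 2 * ε := by
          calc ‖∑ j : ↑t, f j x • (y j - g x)‖ ≤ ∑ j : ↑t, ‖f j x • (y j - g x)‖ :=
                norm_sum_le _ _
            _ ≤ ∑ j : ↑t, f j x * (2 * ε) := by
                apply Finset.sum_le_sum
                intro j _
                rw [norm_smul, Real.norm_eq_abs, abs_of_nonneg (f.nonneg j x)]
                rcases eq_or_ne (f j x) 0 with h0 | h0
                · simp [h0]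
                · have hxU : x ∈ U ↑j := hf j (subset_tsupport _ h0)
                  have hd1 : dist (g x) (g ↑j) < ε := hxU.1
                  have hd2 : dist (g ↑j) (y j) < ε := hyd j
                  have : ‖y j - g x‖ ≤ 2 * ε := by
                    have := (dist_triangle (g x) (g ↑j) (y j)).trans_lt
                      (by linarith : dist (g x) (g ↑j) + dist (g ↑j) (y j) < 2 * ε)
                    rw [dist_eq_norm] at this
                    rw [← norm_neg]
                    simpa [neg_sub] using this.le
                  exact mul_le_mul_of_nonneg_left this (f.nonneg j x)
            _ = (∑ j : ↑t, f j x) * (2 * ε) := by rw [Finset.sum_mul]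
            _ ≤ 1 * (2 * ε) := by
                apply mul_le_mul_of_nonneg_right _ (by positivity)
                rw [← finsum_eq_sum_of_fintype]; exact f.sum_le_one x
            _ = 2 * ε := one_mul _
        have hB : ‖∑ i, ψ i x • (b i - g (s i))‖ ≤ k * ε := by
          calc ‖∑ i, ψ i x • (b i - g (s i))‖ ≤ ∑ i, ‖ψ i x • (b i - g (s i))‖ :=
                norm_sum_le _ _
            _ ≤ ∑ _i : Fin k, ε := by
                apply Finset.sum_le_sum
                intro i _
                rw [norm_smul, Real.norm_eq_abs, abs_of_nonneg (hψmem i x).1]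
                have hbe : ‖b i - g (s i)‖ ≤ ε := by
                  have := hbd i
                  rw [dist_eq_norm] at this
                  rw [← norm_neg]
                  simpa [neg_sub] using this.le
                calc ψ i x * ‖b i - g (s i)‖ ≤ 1 * ε :=
                      mul_le_mul (hψmem i x).2 hbe (norm_nonneg _) zero_le_one
                  _ = ε := one_mul _
            _ = k * ε := by simp [mul_comm]
        calc ‖g x + (∑ j : ↑t, f j x • (y j - g x)) + (∑ i, ψ i x • (b i - g (s i))) - g x‖
            = ‖(∑ j : ↑t, f j x • (y j - g x)) + (∑ i, ψ i x • (b i - g (s i)))‖ := by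
              congr 1; abel
          _ ≤ ‖∑ j : ↑t, f j x • (y j - g x)‖ + ‖∑ i, ψ i x • (b i - g (s i))‖ :=
              norm_add_le _ _
          _ ≤ 2 * ε + k * ε := add_le_add hA hB
          _ = (k + 2) * ε := by ring
      have hlt : (k + 2 : ℝ) * ε < δ := by
        rw [hεdef]
        rw [mul_div_assoc'] -- (k+2)*δ/(k+3)
        rw [div_lt_iff₀ (by positivity)]
        nlinarith [hδ]
      calc dist g h = dist h g := dist_comm _ _
        _ ≤ (k + 2) * ε := hkey
        _ < δ := hlt
end

section
/- Let X be a Banach space and A : D(A) ⊆ X → X a linear operator, X₀ = closure(D(A)). Then the uniform closure in C([-1,0], X) of D₁₀ = {φ ∈ C¹([-1,0], X) : φ(0) ∈ D(A), φ'(0) = A φ(0)} equals {φ ∈ C([-1,0], X) : φ(0) ∈ X₀}. -/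
open MeasureTheory Metric Set
open scoped Convolution

/-- Smooth uniform approximation of a continuous function on `[-1,0]`. -/
lemma smooth_unif_approx {X : Type*} [NormedAddCommGroup X] [NormedSpace ℝ X]
    [CompleteSpace X] (φ : C(Set.Icc (-1 : ℝ) 0, X)) {ε : ℝ} (hε : 0 < ε) :
    ∃ η : ℝ → X, ContDiff ℝ 1 η ∧ ∀ t : Set.Icc (-1 : ℝ) 0, dist (η t) (φ t) ≤ ε := by
  have hle : (-1 : ℝ) ≤ 0 := by norm_num
  set g : ℝ → X := Set.IccExtend hle φ with hg
  have hgc : Continuous g := φ.continuous.Icc_extend'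
  have hgu : UniformContinuous g := by
    have h1 : UniformContinuous (φ : Set.Icc (-1:ℝ) 0 → X) :=
      CompactSpace.uniformContinuous_of_continuous φ.continuous
    exact h1.comp (LipschitzWith.projIcc hle).uniformContinuous
  obtain ⟨δ, hδ, hδ'⟩ := Metric.uniformContinuous_iff.mp hgu ε hε
  set k : ContDiffBump (0 : ℝ) := ⟨δ/3, δ/2, by positivity, by linarith⟩ with hk
  have hgl : LocallyIntegrable g volume := hgc.locallyIntegrable
  refine ⟨k.normed volume ⋆[ContinuousLinearMap.lsmul ℝ ℝ, volume] g, ?_, ?_⟩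
  · exact_mod_cast HasCompactSupport.contDiff_convolution_left (n := 1)
      (ContinuousLinearMap.lsmul ℝ ℝ) (k.hasCompactSupport_normed (μ := volume)) (k.contDiff_normed (μ := volume)) hgl
  · intro t
    have h2 : dist ((k.normed volume ⋆[ContinuousLinearMap.lsmul ℝ ℝ, volume] g) (t:ℝ))
        (g t) ≤ ε := by
      refine k.dist_normed_convolution_le hgc.aestronglyMeasurable fun x hx => ?_
      refine (hδ' ?_).le
      have : k.rOut = δ/2 := rfl
      rw [mem_ball] at hx
      calc dist x (t:ℝ) < δ/2 := by rw [this] at hx; exact hx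
        _ < δ := by linarith
    have h3 : g (t:ℝ) = φ t := by
      rw [hg, Set.IccExtend_of_mem hle _ t.2]
    rwa [h3] at h2

/-- The uniform closure of `{φ ∈ C¹([-1,0],X) : φ(0) ∈ D(A), φ'(0) = Aφ(0)}` in
`C([-1,0],X)` is `{φ : φ(0) ∈ closure D(A)}`. -/
theorem closure_delay_domain (X : Type*) [NormedAddCommGroup X] [NormedSpace ℝ X]
    [CompleteSpace X] (A : X →ₗ.[ℝ] X) :
    closure {φ : C(Set.Icc (-1 : ℝ) 0, X) |
        ∃ ψ : ℝ → X, ContDiffOn ℝ 1 ψ (Set.Icc (-1 : ℝ) 0) ∧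
          (∀ t : Set.Icc (-1 : ℝ) 0, φ t = ψ t) ∧
          ∃ h : ψ 0 ∈ A.domain, derivWithin ψ (Set.Icc (-1 : ℝ) 0) 0 = A ⟨ψ 0, h⟩} =
      {φ : C(Set.Icc (-1 : ℝ) 0, X) |
        φ ⟨0, by norm_num⟩ ∈ closure (A.domain : Set X)} := by
  have h0m : (0 : ℝ) ∈ Set.Icc (-1 : ℝ) 0 := by norm_num
  apply Set.Subset.antisymm
  · apply closure_minimal
    · rintro φ ⟨ψ, -, hφψ, hd, -⟩
      have : φ ⟨0, h0m⟩ = ψ 0 := hφψ ⟨0, h0m⟩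
      simp only [Set.mem_setOf_eq, this]
      exact subset_closure hd
    · exact isClosed_closure.preimage (continuous_eval_const _)
  · intro φ hφ
    rw [Metric.mem_closure_iff]
    intro ε hε
    simp only [Set.mem_setOf_eq] at hφ
    obtain ⟨x, hx, hdx⟩ := Metric.mem_closure_iff.mp hφ (ε/4) (by positivity)
    obtain ⟨η, hη, hηφ⟩ := smooth_unif_approx φ (show (0:ℝ) < ε/4 by positivity)
    set v : X := A ⟨x, hx⟩ - deriv η 0 with hv
    set K : ℝ := max 1 (4 * ‖v‖ / ε) with hK
    have hK1 : (1 : ℝ) ≤ K := le_max_left _ _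
    have hK0 : (0 : ℝ) < K := by linarith
    have hKv : ‖v‖ / K ≤ ε / 4 := by
      rw [div_le_iff₀ hK0]
      have h := le_max_right 1 (4 * ‖v‖ / ε)
      rw [div_le_iff₀ hε] at h
      linarith
    set θ : ℝ → ℝ := fun t => t * Real.exp (K * t) with hθ
    have hθ0 : θ 0 = 0 := by simp [hθ]
    have hθd : HasDerivAt θ 1 0 := by
      have h1 : HasDerivAt (fun t : ℝ => K * t) K 0 := by
        simpa using (hasDerivAt_id (0:ℝ)).const_mul K
      have h2 := h1.exp
      have h3 := (hasDerivAt_id (0:ℝ)).mul h2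
      exact (by simpa using h3 : HasDerivAt (id * fun x => Real.exp (K * x)) 1 0)
    have hθsm : ContDiff ℝ 1 θ := contDiff_id.mul ((contDiff_const.mul contDiff_id).exp)
    have hθb : ∀ t ∈ Set.Icc (-1:ℝ) 0, |θ t| ≤ 1 / K := by
      intro t ht
      have ht0 : t ≤ 0 := ht.2
      set u : ℝ := -(K * t) with hu
      have hu0 : 0 ≤ u := by nlinarith
      have hue : u ≤ Real.exp u := by linarith [Real.add_one_le_exp u]
      have hup : (0:ℝ) < Real.exp u := Real.exp_pos u
      have h1 : |θ t| = (u / K) * Real.exp (-u) := by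
        rw [hθ, abs_mul, abs_of_pos (Real.exp_pos _), abs_of_nonpos ht0]
        have : -t = u / K := by field_simp [hu]; ring
        rw [this]
        congr 1
        rw [hu]; ring_nf
      rw [h1, Real.exp_neg]
      have h2 : u * (Real.exp u)⁻¹ ≤ 1 := by
        rw [← div_eq_mul_inv, div_le_one hup]; exact hue
      calc u / K * (Real.exp u)⁻¹ = (u * (Real.exp u)⁻¹) * K⁻¹ := by ring
        _ ≤ 1 * K⁻¹ := mul_le_mul_of_nonneg_right h2 (by positivity)
        _ = 1 / K := by ring
    set ψ : ℝ → X := fun t => η t + ((x - η 0) + θ t • v) with hψ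
    have hψ0 : ψ 0 = x := by simp [hψ, hθ0]
    have hψx : ψ 0 ∈ A.domain := hψ0 ▸ hx
    have hψsm : ContDiff ℝ 1 ψ := hη.add (contDiff_const.add (hθsm.smul contDiff_const))
    have hψd : HasDerivAt ψ (A ⟨x, hx⟩) 0 := by
      have hηd : HasDerivAt η (deriv η 0) 0 :=
        ((hη.differentiable one_ne_zero) 0).hasDerivAt
      have h := hηd.add ((hasDerivAt_const (0:ℝ) (x - η 0)).add (hθd.smul_const v))
      have he : deriv η 0 + (0 + (1:ℝ) • v) = A ⟨x, hx⟩ := by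
        simp [hv]
      rwa [he] at h
    set χ : C(Set.Icc (-1:ℝ) 0, X) :=
      ⟨fun t => ψ t, hψsm.continuous.comp continuous_subtype_val⟩ with hχ
    refine ⟨χ, ⟨ψ, hψsm.contDiffOn, fun t => rfl, hψx, ?_⟩, ?_⟩
    · rw [hψd.differentiableAt.derivWithin ((uniqueDiffOn_Icc (by norm_num)) 0 h0m),
        hψd.deriv]
      congr 1
      exact Subtype.ext hψ0.symm
    · have hb : ∀ t : Set.Icc (-1:ℝ) 0, dist (φ t) (χ t) ≤ 3 * (ε/4) + dist (φ ⟨0, h0m⟩) x := by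
        intro t
        have h1 : dist (φ t) (η t) ≤ ε / 4 := by
          rw [dist_comm]; exact hηφ t
        have h2 : dist (η t) (ψ t) = ‖(x - η 0) + θ t • v‖ := by
          rw [dist_eq_norm']
          simp [hψ]
        have h3 : ‖x - η 0‖ ≤ dist (φ ⟨0, h0m⟩) x + ε / 4 := by
          have h4 : dist (η ((⟨0, h0m⟩ : Set.Icc (-1:ℝ) 0) : ℝ)) (φ ⟨0, h0m⟩) ≤ ε/4 :=
            hηφ ⟨0, h0m⟩
          calc ‖x - η 0‖ = dist x (η 0) := (dist_eq_norm _ _).symm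
            _ ≤ dist x (φ ⟨0, h0m⟩) + dist (φ ⟨0, h0m⟩) (η 0) := dist_triangle _ _ _
            _ ≤ dist (φ ⟨0, h0m⟩) x + ε / 4 := by
                rw [dist_comm x]
                have : dist (φ ⟨0, h0m⟩) (η 0) ≤ ε / 4 := by
                  rw [dist_comm]; exact h4
                linarith
        have h5 : ‖θ (t:ℝ) • v‖ ≤ ε / 4 := by
          rw [norm_smul, Real.norm_eq_abs]
          calc |θ (t:ℝ)| * ‖v‖ ≤ (1/K) * ‖v‖ := by
                have := hθb t t.2
                exact mul_le_mul_of_nonneg_right this (norm_nonneg v)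
            _ = ‖v‖ / K := by ring
            _ ≤ ε / 4 := hKv
        have h6 : dist (η t) (ψ t) ≤ dist (φ ⟨0, h0m⟩) x + ε / 4 + ε / 4 := by
          rw [h2]
          calc ‖(x - η 0) + θ (t:ℝ) • v‖ ≤ ‖x - η 0‖ + ‖θ (t:ℝ) • v‖ := norm_add_le _ _
            _ ≤ dist (φ ⟨0, h0m⟩) x + ε / 4 + ε / 4 := by linarith
        calc dist (φ t) (χ t) = dist (φ t) (ψ t) := rfl
          _ ≤ dist (φ t) (η t) + dist (η t) (ψ t) := dist_triangle _ _ _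
          _ ≤ 3 * (ε/4) + dist (φ ⟨0, h0m⟩) x := by linarith
      haveI : Nonempty (Set.Icc (-1:ℝ) 0) := ⟨⟨0, h0m⟩⟩
      have hC : dist φ χ ≤ 3 * (ε/4) + dist (φ ⟨0, h0m⟩) x :=
        ContinuousMap.dist_le_iff_of_nonempty.mpr hb
      calc dist φ χ ≤ 3 * (ε/4) + dist (φ ⟨0, h0m⟩) x := hC
        _ < ε := by linarith
end
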